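/- arXiv:2204.12583 — 6 statements merged into one kernel-verified Lean document; each statement's English description precedes it below -/
import Mathlib

section
/- Let T : ℓ¹ → c₀ be the canonical injection (the identity map viewing a summable sequence as a null sequence). Then αₙ(T) = 1 for every n ∈ ℕ. -/
open NormedSpace Metric Filter Topology
open scoped ENNReal Pointwise

/-- Pointwise bound for `C₀` functions. -/
lemma c0_apply_le_norm (f : ZeroAtInftyContinuousMap ℕ ℝ) (k : ℕ) : ‖f k‖ ≤ ‖f‖ := by
  rw [← ZeroAtInftyContinuousMap.norm_toBCF_eq_norm]
  exact f.toBCF.norm_coe_le_norm k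

lemma c0_sum_apply {ι : Type*} (s : Finset ι) (f : ι → ZeroAtInftyContinuousMap ℕ ℝ) (k : ℕ) :
    (∑ i ∈ s, f i) k = ∑ i ∈ s, f i k := by
  induction s using Finset.cons_induction with
  | empty => simp
  | cons i s hi ih => simp [Finset.sum_cons, ih]

lemma arith_aux (s a ε C : ℝ) (hs : 0 ≤ s) (ha : 0 ≤ a) (hC : C = s * (a + 1) + 1)
    (hε : 0 < ε) : s * a * (ε / C) < ε := by
  have hCpos : 0 < C := by nlinarith
  have h2 : s * a < C := by nlinarith
  calc s * a * (ε / C) < C * (ε / C) := mul_lt_mul_of_pos_right h2 (div_pos hε hCpos)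
    _ = ε := by rw [mul_comm, div_mul_cancel₀ ε (ne_of_gt hCpos)]

lemma key (T A : lp (fun _ : ℕ => ℝ) 1 →L[ℝ] ZeroAtInftyContinuousMap ℕ ℝ)
    (hT : ∀ (x : lp (fun _ : ℕ => ℝ) 1) (k : ℕ), T x k = x k)
    (hA : FiniteDimensional ℝ (LinearMap.range (A : lp (fun _ : ℕ => ℝ) 1 →ₗ[ℝ] ZeroAtInftyContinuousMap ℕ ℝ))) : (1:ℝ) ≤ ‖T - A‖ := by
  by_contra hlt
  push_neg at hlt
  set ε : ℝ := 1 - ‖T - A‖ with hε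
  have hε0 : 0 < ε := by simp only [hε]; linarith
  have he : ∀ k : ℕ, ‖lp.single (E := fun _ : ℕ => ℝ) 1 k (1:ℝ)‖ = 1 := fun k => by
    simpa using lp.norm_single (E := fun _ : ℕ => ℝ) (p := 1) (by norm_num) (fun _ : ℕ => (1:ℝ)) k
  have hek : ∀ k : ℕ, ε ≤ A (lp.single 1 k 1) k := by
    intro k
    have h1 : ‖(T - A) (lp.single 1 k 1)‖ ≤ ‖T - A‖ := by
      simpa [he k] using (T - A).le_opNorm (lp.single 1 k 1)
    have h2 : ‖((T - A) (lp.single 1 k 1)) k‖ ≤ ‖T - A‖ :=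
      le_trans (c0_apply_le_norm _ k) h1
    have h3 : ((T - A) (lp.single 1 k 1)) k = 1 - A (lp.single 1 k 1) k := by
      have hTk := hT (lp.single 1 k 1) k
      have : (lp.single (E := fun _ : ℕ => ℝ) 1 k (1:ℝ) : ∀ _ : ℕ, ℝ) k = 1 :=
        lp.single_apply_self (E := fun _ : ℕ => ℝ) 1 k (1:ℝ)
      simp [ContinuousLinearMap.sub_apply, hTk, this]
    rw [h3] at h2
    have := abs_le.mp h2
    simp only [hε]
    linarith [this.2, le_abs_self (1 - A (lp.single 1 k 1) k)]
  classical
  set V := LinearMap.range (A : lp (fun _ : ℕ => ℝ) 1 →ₗ[ℝ] ZeroAtInftyContinuousMap ℕ ℝ) with hV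
  haveI : FiniteDimensional ℝ V := hA
  haveI : Module.Free ℝ V := Module.Free.of_divisionRing ℝ V
  letI iN : NormedAddCommGroup V := Submodule.normedAddCommGroup V
  letI iS : NormedSpace ℝ V := Submodule.normedSpace V
  letI iT : TopologicalSpace V := iN.toMetricSpace.toUniformSpace.toTopologicalSpace
  let b : Module.Basis (Fin (Module.finrank ℝ V)) ℝ V := Module.finBasis ℝ V
  let φ : Fin (Module.finrank ℝ V) → V →L[ℝ] ℝ :=
    fun i => ⟨b.coord i, (b.coord i).continuous_of_finiteDimensional⟩
  set C : ℝ := (∑ i, ‖φ i‖) * (‖A‖ + 1) + 1 with hC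
  have hCpos : 0 < C := by positivity
  have hδ : 0 < ε / C := div_pos hε0 hCpos
  have hev : ∀ᶠ k in cocompact ℕ, ∀ i, ‖(b i : ZeroAtInftyContinuousMap ℕ ℝ) k‖ < ε / C := by
    rw [eventually_all]
    intro i
    exact NormedAddCommGroup.tendsto_nhds_zero.mp
      (zero_at_infty ((b i : ZeroAtInftyContinuousMap ℕ ℝ))) _ hδ
  haveI : NeBot (cocompact ℕ) := by
    rw [cocompact_eq_cofinite]; exact Filter.cofinite_neBot
  obtain ⟨k, hk⟩ := hev.exists
  set v : V := ⟨A (lp.single 1 k 1), LinearMap.mem_range_self _ _⟩ with hv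
  have hAnorm : ‖(v : ZeroAtInftyContinuousMap ℕ ℝ)‖ ≤ ‖A‖ := by
    simpa [hv, he k] using A.le_opNorm (lp.single 1 k 1)
  have hrep : (v : ZeroAtInftyContinuousMap ℕ ℝ) k
      = ∑ i, b.repr v i * (b i : ZeroAtInftyContinuousMap ℕ ℝ) k := by
    conv_lhs => rw [← b.sum_repr v]
    rw [Submodule.coe_sum, c0_sum_apply]
    exact Finset.sum_congr rfl fun i _ => by
      rw [Submodule.coe_smul, ZeroAtInftyContinuousMap.coe_smul]
      simp
  have hb1 : ∀ i, ‖b.repr v i‖ ≤ ‖φ i‖ * ‖A‖ := by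
    intro i
    have h := (φ i).le_opNorm v
    have hveq : ‖v‖ = ‖(v : ZeroAtInftyContinuousMap ℕ ℝ)‖ := rfl
    have hφv : φ i v = b.repr v i := by simp [φ, Module.Basis.coord_apply]
    rw [hφv, hveq] at h
    exact h.trans (mul_le_mul_of_nonneg_left hAnorm (norm_nonneg _))
  have hsum : ‖(v : ZeroAtInftyContinuousMap ℕ ℝ) k‖ ≤ (∑ i, ‖φ i‖ * ‖A‖) * (ε / C) := by
    rw [hrep, Finset.sum_mul]
    refine (norm_sum_le _ _).trans (Finset.sum_le_sum fun i _ => ?_)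
    rw [norm_mul]
    exact mul_le_mul (hb1 i) (le_of_lt (hk i)) (norm_nonneg _) (by positivity)
  have hlow : ε ≤ ‖(v : ZeroAtInftyContinuousMap ℕ ℝ) k‖ := by
    have := hek k
    calc ε ≤ A (lp.single 1 k 1) k := hek k
      _ ≤ ‖A (lp.single 1 k 1) k‖ := le_abs_self _
      _ = ‖(v : ZeroAtInftyContinuousMap ℕ ℝ) k‖ := by rw [hv]
  have hfrac : (∑ i, ‖φ i‖ * ‖A‖) * (ε / C) < ε := by
    rw [← Finset.sum_mul]
    exact arith_aux _ _ _ _ (Finset.sum_nonneg fun i _ => norm_nonneg _) (norm_nonneg A) hC hε0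
  linarith [hlow.trans hsum]

/-- The `n`-th approximation number: `αₙ(T) = inf {‖T - A‖ : rank A ≤ n}`. -/
noncomputable def approxNumber {X Y : Type*} [NormedAddCommGroup X] [NormedSpace ℝ X]
    [NormedAddCommGroup Y] [NormedSpace ℝ Y] (n : ℕ) (T : X →L[ℝ] Y) : ℝ :=
  sInf {c : ℝ | ∃ A : X →L[ℝ] Y, FiniteDimensional ℝ (LinearMap.range (A : X →ₗ[ℝ] Y)) ∧
    Module.finrank ℝ (LinearMap.range (A : X →ₗ[ℝ] Y)) ≤ n ∧ c = ‖T - A‖}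

/-- For the canonical injection `T : ℓ¹ → c₀`, `αₙ(T) = 1` for every `n`. -/
theorem approxNumber_canonical_injection_l1_c0
    (T : lp (fun _ : ℕ => ℝ) 1 →L[ℝ] ZeroAtInftyContinuousMap ℕ ℝ)
    (hT : ∀ (x : lp (fun _ : ℕ => ℝ) 1) (k : ℕ), T x k = x k) (n : ℕ) :
    approxNumber n T = 1 := by
  have hTle : ‖T‖ ≤ 1 := by
    refine T.opNorm_le_bound zero_le_one fun x => ?_
    rw [one_mul, ← ZeroAtInftyContinuousMap.norm_toBCF_eq_norm]
    refine (BoundedContinuousFunction.norm_le (norm_nonneg x)).2 fun k => ?_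
    have h1 : (T x).toBCF k = T x k := rfl
    rw [h1, hT]
    exact lp.norm_apply_le_norm one_ne_zero x k
  have hbot : LinearMap.range
      ((0 : lp (fun _ : ℕ => ℝ) 1 →L[ℝ] ZeroAtInftyContinuousMap ℕ ℝ) : lp (fun _ : ℕ => ℝ) 1 →ₗ[ℝ] ZeroAtInftyContinuousMap ℕ ℝ) = ⊥ := by
    exact LinearMap.range_zero
  have hfd0 : FiniteDimensional ℝ (LinearMap.range
      ((0 : lp (fun _ : ℕ => ℝ) 1 →L[ℝ] ZeroAtInftyContinuousMap ℕ ℝ) : lp (fun _ : ℕ => ℝ) 1 →ₗ[ℝ] ZeroAtInftyContinuousMap ℕ ℝ)) := by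
    rw [hbot]; infer_instance
  have hsub : T - 0 = T := sub_zero T
  have hT1 : ‖T‖ = 1 :=
    le_antisymm hTle (by have := key T 0 hT hfd0; rwa [hsub] at this)
  have hlow : ∀ c ∈ {c : ℝ | ∃ A : lp (fun _ : ℕ => ℝ) 1 →L[ℝ] ZeroAtInftyContinuousMap ℕ ℝ,
      FiniteDimensional ℝ (LinearMap.range (A : lp (fun _ : ℕ => ℝ) 1 →ₗ[ℝ] ZeroAtInftyContinuousMap ℕ ℝ)) ∧
      Module.finrank ℝ (LinearMap.range (A : lp (fun _ : ℕ => ℝ) 1 →ₗ[ℝ] ZeroAtInftyContinuousMap ℕ ℝ)) ≤ n ∧ c = ‖T - A‖}, 1 ≤ c := by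
    rintro c ⟨A, hA, -, rfl⟩
    exact key T A hT hA
  have h1mem : (1:ℝ) ∈ {c : ℝ | ∃ A : lp (fun _ : ℕ => ℝ) 1 →L[ℝ] ZeroAtInftyContinuousMap ℕ ℝ,
      FiniteDimensional ℝ (LinearMap.range (A : lp (fun _ : ℕ => ℝ) 1 →ₗ[ℝ] ZeroAtInftyContinuousMap ℕ ℝ)) ∧
      Module.finrank ℝ (LinearMap.range (A : lp (fun _ : ℕ => ℝ) 1 →ₗ[ℝ] ZeroAtInftyContinuousMap ℕ ℝ)) ≤ n ∧ c = ‖T - A‖} := by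
    refine ⟨0, hfd0, ?_, ?_⟩
    · rw [hbot]; simp
    · rw [hsub, hT1]
  rw [approxNumber]
  exact le_antisymm (csInf_le ⟨1, hlow⟩ h1mem) (le_csInf ⟨1, h1mem⟩ hlow)
end

section
/- Let S : ℓ¹ → ℓ^∞ be the natural injection (the identity map viewing a summable sequence as a bounded sequence); S is the adjoint of the canonical injection ℓ¹ → c₀ under the identifications c₀* = ℓ¹ and (ℓ¹)* = ℓ^∞. Then αₙ(S) = 1/2 for every n ≥ 1. -/
open NormedSpace Metric Filter Topology
open scoped ENNReal Pointwise

set_option maxHeartbeats 1000000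
set_option synthInstance.maxHeartbeats 1000000

/-- The constant-one sequence in `ℓ^∞`. -/
noncomputable def oneInf : lp (fun _ : ℕ => ℝ) ∞ :=
  ⟨fun _ => (1:ℝ), memℓp_infty ⟨1, by rintro r ⟨i, rfl⟩; simp⟩⟩

lemma oneInf_apply (k : ℕ) : (oneInf : ∀ k, ℝ) k = 1 := rfl

lemma norm_oneInf : ‖oneInf‖ = 1 := by
  rw [lp.norm_eq_ciSup]
  simp [oneInf_apply]

lemma summable_of_l1 (x : lp (fun _ : ℕ => ℝ) 1) : Summable fun k => (x k : ℝ) := by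
  apply Summable.of_norm
  simpa using (lp.memℓp x).summable (by norm_num)

lemma summable_abs_of_l1 (x : lp (fun _ : ℕ => ℝ) 1) : Summable fun k => |x k| := by
  simpa using (lp.memℓp x).summable (p := 1) (by norm_num)

lemma norm_l1 (x : lp (fun _ : ℕ => ℝ) 1) : ‖x‖ = ∑' k, |x k| := by
  have := lp.norm_eq_tsum_rpow (p := 1) (by norm_num) x
  simpa using this

/-- The rank-one operator `x ↦ ((∑ₖ xₖ)/2) • (1,1,1,…)`. -/
noncomputable def halfSumOp : lp (fun _ : ℕ => ℝ) 1 →L[ℝ] lp (fun _ : ℕ => ℝ) ∞ :=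
  LinearMap.mkContinuous
    { toFun := fun x => ((∑' k, x k) / 2) • oneInf
      map_add' := fun x y => by
        have h : (∑' k, ((x + y : lp (fun _ : ℕ => ℝ) 1) : ∀ k, ℝ) k)
            = (∑' k, (x : ∀ k, ℝ) k) + ∑' k, (y : ∀ k, ℝ) k := by
          rw [tsum_congr (fun k => by rw [lp.coeFn_add]; rfl : ∀ k,
              ((x + y : lp (fun _ : ℕ => ℝ) 1) : ∀ k, ℝ) k = x k + y k),
            Summable.tsum_add (summable_of_l1 x) (summable_of_l1 y)]
        beta_reduce
        rw [h, ← add_smul, add_div]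
      map_smul' := fun c x => by
        have h : (∑' k, ((c • x : lp (fun _ : ℕ => ℝ) 1) : ∀ k, ℝ) k)
            = c * ∑' k, (x : ∀ k, ℝ) k := by
          rw [tsum_congr (fun k => by rw [lp.coeFn_smul]; rfl : ∀ k,
              ((c • x : lp (fun _ : ℕ => ℝ) 1) : ∀ k, ℝ) k = c * x k),
            tsum_mul_left]
        simp only [RingHom.id_apply]
        beta_reduce
        rw [h, smul_smul, mul_div_assoc] }
    1
    (fun x => by
      simp only [LinearMap.coe_mk, AddHom.coe_mk]
      rw [norm_smul, norm_oneInf, mul_one, one_mul]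
      have h1 : |∑' k, (x k : ℝ)| ≤ ∑' k, |x k| := by
        simpa using norm_tsum_le_tsum_norm (f := fun k => (x k : ℝ))
          (by simpa using summable_abs_of_l1 x)
      rw [norm_l1 x, norm_div]
      simp only [Real.norm_eq_abs]
      have h2 : (0:ℝ) ≤ ∑' k, |x k| := tsum_nonneg fun k => abs_nonneg _
      rw [abs_two]
      linarith)

lemma halfSumOp_apply (x : lp (fun _ : ℕ => ℝ) 1) :
    halfSumOp x = ((∑' k, x k) / 2) • oneInf := rfl

lemma range_halfSumOp_le : LinearMap.range (halfSumOp : lp (fun _ : ℕ => ℝ) 1 →ₗ[ℝ] lp (fun _ : ℕ => ℝ) ∞) ≤ Submodule.span ℝ {oneInf} := by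
  rintro y ⟨x, rfl⟩
  rw [ContinuousLinearMap.coe_coe, halfSumOp_apply]
  exact Submodule.smul_mem _ _ (Submodule.mem_span_singleton_self oneInf)

lemma upper_bound
    (S : lp (fun _ : ℕ => ℝ) 1 →L[ℝ] lp (fun _ : ℕ => ℝ) ∞)
    (hS : ∀ (x : lp (fun _ : ℕ => ℝ) 1) (k : ℕ), S x k = x k) :
    ‖S - halfSumOp‖ ≤ 1/2 := by
  apply ContinuousLinearMap.opNorm_le_bound _ (by norm_num)
  intro x
  apply lp.norm_le_of_forall_le (by positivity)
  intro k
  have hco : ((S - halfSumOp) x : ∀ k, ℝ) k = x k - (∑' j, x j) / 2 := by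
    have h0 : (S - halfSumOp) x = S x - halfSumOp x := by simp
    rw [h0, lp.coeFn_sub, Pi.sub_apply, hS x k, halfSumOp_apply]
    congr 1
    rw [lp.coeFn_smul, Pi.smul_apply, oneInf_apply, smul_eq_mul, mul_one]
  rw [hco, norm_l1]
  set s := ∑' j, (x j : ℝ) with hs
  have hsum := summable_of_l1 x
  have habs := summable_abs_of_l1 x
  have hsplit : s = x k + ∑' j, ite (j = k) 0 (x j) := Summable.tsum_eq_add_tsum_ite hsum k
  have habssplit : ∑' j, |x j| = |x k| + ∑' j, ite (j = k) 0 |x j| :=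
    Summable.tsum_eq_add_tsum_ite habs k
  have ht : |∑' j, ite (j = k) 0 (x j)| ≤ ∑' j, ite (j = k) 0 |x j| := by
    have hsm : Summable fun j => ‖ite (j = k) (0:ℝ) (x j)‖ := by
      apply Summable.of_nonneg_of_le (fun j => norm_nonneg _)
        (fun j => by by_cases h : j = k <;> simp [h, Real.norm_eq_abs]) habs
    have := norm_tsum_le_tsum_norm (f := fun j => ite (j = k) (0:ℝ) (x j)) hsm
    refine le_trans (by simpa using this) (le_of_eq (tsum_congr fun j => ?_))
    by_cases h : j = k <;> simp [h, Real.norm_eq_abs]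
  have h1 : |x k - (∑' j, ite (j = k) 0 (x j))| ≤ |x k| + |∑' j, ite (j = k) 0 (x j)| :=
    abs_sub _ _
  have heq : x k - s / 2 = (x k - (∑' j, ite (j = k) 0 (x j))) / 2 := by
    rw [hsplit]; ring
  rw [Real.norm_eq_abs, heq, abs_div, abs_two, habssplit]
  linarith

lemma lower_bound
    (S : lp (fun _ : ℕ => ℝ) 1 →L[ℝ] lp (fun _ : ℕ => ℝ) ∞)
    (hS : ∀ (x : lp (fun _ : ℕ => ℝ) 1) (k : ℕ), S x k = x k)
    (A : lp (fun _ : ℕ => ℝ) 1 →L[ℝ] lp (fun _ : ℕ => ℝ) ∞)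
    (hA : FiniteDimensional ℝ (LinearMap.range (A : lp (fun _ : ℕ => ℝ) 1 →ₗ[ℝ] lp (fun _ : ℕ => ℝ) ∞))) :
    (1:ℝ)/2 ≤ ‖S - A‖ := by
  set e : ℕ → lp (fun _ : ℕ => ℝ) 1 := fun i => lp.single 1 i (1:ℝ) with he
  have hnorme : ∀ i, ‖e i‖ = 1 := by
    intro i
    have := lp.norm_single (p := 1) (E := fun _ : ℕ => ℝ) (by norm_num) i (1:ℝ)
    exact this.trans norm_one
  have key : ∀ δ : ℝ, 0 < δ → (1 - δ)/2 ≤ ‖S - A‖ := by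
    intro δ hδ
    let K := LinearMap.range (A : lp (fun _ : ℕ => ℝ) 1 →ₗ[ℝ] lp (fun _ : ℕ => ℝ) ∞)
    let g : ℕ → K := fun i => ⟨A (e i), LinearMap.mem_range_self _ _⟩
    obtain ⟨i, j, hij, hclose⟩ : ∃ i j : ℕ, i ≠ j ∧ ‖A (e i) - A (e j)‖ < δ := by
      have hmem : ∀ i, g i ∈ closedBall (0 : K) ‖A‖ := by
        intro i
        rw [mem_closedBall, dist_zero_right]
        show ‖A (e i)‖ ≤ ‖A‖
        calc ‖A (e i)‖ ≤ ‖A‖ * ‖e i‖ := A.le_opNorm _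
        _ = ‖A‖ := by rw [hnorme i, mul_one]
      obtain ⟨a, -, φ, hφ, hconv⟩ :=
        (isCompact_closedBall (0 : K) ‖A‖).tendsto_subseq hmem
      have hc : CauchySeq (g ∘ φ) := hconv.cauchySeq
      rw [Metric.cauchySeq_iff] at hc
      obtain ⟨N, hN⟩ := hc δ hδ
      refine ⟨φ (N+1), φ N, fun h => ?_, ?_⟩
      · exact absurd (hφ.injective h) (by omega)
      · have h2 := hN (N+1) (by omega) N le_rfl
        rw [Function.comp_apply, Function.comp_apply, dist_eq_norm] at h2
        exact h2
    set u := e i - e j with hu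
    have hunorm : ‖u‖ ≤ 2 := by
      calc ‖u‖ ≤ ‖e i‖ + ‖e j‖ := norm_sub_le _ _
      _ = 2 := by rw [hnorme, hnorme]; norm_num
    have hui : (u : ∀ k, ℝ) i = 1 := by
      have h1 : (e i : ∀ k, ℝ) i = 1 := by
        simp only [he]; exact lp.single_apply_self (E := fun _ : ℕ => ℝ) 1 i (1:ℝ)
      have h2 : (e j : ∀ k, ℝ) i = 0 := by
        simp only [he]; exact lp.single_apply_ne (E := fun _ : ℕ => ℝ) 1 j (1:ℝ) hij
      rw [hu, lp.coeFn_sub, Pi.sub_apply, h1, h2, sub_zero]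
    have hAui : |(A u : ∀ k, ℝ) i| ≤ ‖A u‖ := by
      have := lp.norm_apply_le_norm (E := fun _ : ℕ => ℝ) ENNReal.top_ne_zero (A u) i
      simpa using this
    have hAu : ‖A u‖ < δ := by
      rw [hu, map_sub]; exact hclose
    have hv : (1 : ℝ) - δ ≤ ‖(S - A) u‖ := by
      have h1 : ((S - A) u : ∀ k, ℝ) i = 1 - (A u : ∀ k, ℝ) i := by
        have h0 : (S - A) u = S u - A u := by simp
        rw [h0, lp.coeFn_sub, Pi.sub_apply, hS u i, hui]
      have h2 : |((S - A) u : ∀ k, ℝ) i| ≤ ‖(S - A) u‖ := by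
        have := lp.norm_apply_le_norm (E := fun _ : ℕ => ℝ) ENNReal.top_ne_zero ((S - A) u) i
        simpa using this
      have ht : |(A u : ∀ k, ℝ) i| < δ := lt_of_le_of_lt hAui hAu
      rw [h1] at h2
      have h3 : (1:ℝ) - δ ≤ |1 - (A u : ∀ k, ℝ) i| := by
        have := le_abs_self ((A u : ∀ k, ℝ) i)
        have := le_abs_self (1 - (A u : ∀ k, ℝ) i)
        linarith
      linarith
    have hle := (S - A).le_opNorm u
    nlinarith [norm_nonneg (S - A)]
  refine le_of_forall_pos_le_add fun ε hε => ?_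
  have := key (2 * ε) (by linarith)
  linarith

/-- For the natural injection `S : ℓ¹ → ℓ^∞`, `αₙ(S) = 1/2` for every `n ≥ 1`. -/
theorem approxNumber_natural_injection_l1_linfty
    (S : lp (fun _ : ℕ => ℝ) 1 →L[ℝ] lp (fun _ : ℕ => ℝ) ∞)
    (hS : ∀ (x : lp (fun _ : ℕ => ℝ) 1) (k : ℕ), S x k = x k)
    (n : ℕ) (hn : 1 ≤ n) :
    approxNumber n S = 1 / 2 := by
  unfold approxNumber
  have hfd : FiniteDimensional ℝ (LinearMap.range (halfSumOp : lp (fun _ : ℕ => ℝ) 1 →ₗ[ℝ] lp (fun _ : ℕ => ℝ) ∞)) :=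
    Submodule.finiteDimensional_of_le range_halfSumOp_le
  have hrk : Module.finrank ℝ (LinearMap.range (halfSumOp : lp (fun _ : ℕ => ℝ) 1 →ₗ[ℝ] lp (fun _ : ℕ => ℝ) ∞)) ≤ n := by
    haveI := hfd
    calc Module.finrank ℝ (LinearMap.range (halfSumOp : lp (fun _ : ℕ => ℝ) 1 →ₗ[ℝ] lp (fun _ : ℕ => ℝ) ∞))
        ≤ Module.finrank ℝ (Submodule.span ℝ {oneInf}) :=
          Submodule.finrank_mono range_halfSumOp_le
      _ ≤ 1 := (finrank_span_le_card _).trans (by simp)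
      _ ≤ n := hn
  have hmem : ‖S - halfSumOp‖ ∈ {c : ℝ | ∃ A : lp (fun _ : ℕ => ℝ) 1 →L[ℝ] lp (fun _ : ℕ => ℝ) ∞,
      FiniteDimensional ℝ (LinearMap.range (A : lp (fun _ : ℕ => ℝ) 1 →ₗ[ℝ] lp (fun _ : ℕ => ℝ) ∞)) ∧
      Module.finrank ℝ (LinearMap.range (A : lp (fun _ : ℕ => ℝ) 1 →ₗ[ℝ] lp (fun _ : ℕ => ℝ) ∞)) ≤ n ∧ ‖S - halfSumOp‖ = ‖S - A‖} :=
    ⟨halfSumOp, hfd, hrk, rfl⟩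
  have hlb : ∀ c ∈ {c : ℝ | ∃ A : lp (fun _ : ℕ => ℝ) 1 →L[ℝ] lp (fun _ : ℕ => ℝ) ∞,
      FiniteDimensional ℝ (LinearMap.range (A : lp (fun _ : ℕ => ℝ) 1 →ₗ[ℝ] lp (fun _ : ℕ => ℝ) ∞)) ∧
      Module.finrank ℝ (LinearMap.range (A : lp (fun _ : ℕ => ℝ) 1 →ₗ[ℝ] lp (fun _ : ℕ => ℝ) ∞)) ≤ n ∧ c = ‖S - A‖}, (1:ℝ)/2 ≤ c := by
    rintro c ⟨A, hA, -, rfl⟩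
    exact lower_bound S hS A hA
  have hbdd : BddBelow {c : ℝ | ∃ A : lp (fun _ : ℕ => ℝ) 1 →L[ℝ] lp (fun _ : ℕ => ℝ) ∞,
      FiniteDimensional ℝ (LinearMap.range (A : lp (fun _ : ℕ => ℝ) 1 →ₗ[ℝ] lp (fun _ : ℕ => ℝ) ∞)) ∧
      Module.finrank ℝ (LinearMap.range (A : lp (fun _ : ℕ => ℝ) 1 →ₗ[ℝ] lp (fun _ : ℕ => ℝ) ∞)) ≤ n ∧ c = ‖S - A‖} := ⟨1/2, hlb⟩
  have h1 : sInf {c : ℝ | ∃ A : lp (fun _ : ℕ => ℝ) 1 →L[ℝ] lp (fun _ : ℕ => ℝ) ∞,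
      FiniteDimensional ℝ (LinearMap.range (A : lp (fun _ : ℕ => ℝ) 1 →ₗ[ℝ] lp (fun _ : ℕ => ℝ) ∞)) ∧
      Module.finrank ℝ (LinearMap.range (A : lp (fun _ : ℕ => ℝ) 1 →ₗ[ℝ] lp (fun _ : ℕ => ℝ) ∞)) ≤ n ∧ c = ‖S - A‖} ≤ ‖S - halfSumOp‖ :=
    csInf_le hbdd ⟨halfSumOp, hfd, hrk, rfl⟩
  have h2 : (1:ℝ)/2 ≤ sInf {c : ℝ | ∃ A : lp (fun _ : ℕ => ℝ) 1 →L[ℝ] lp (fun _ : ℕ => ℝ) ∞,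
      FiniteDimensional ℝ (LinearMap.range (A : lp (fun _ : ℕ => ℝ) 1 →ₗ[ℝ] lp (fun _ : ℕ => ℝ) ∞)) ∧
      Module.finrank ℝ (LinearMap.range (A : lp (fun _ : ℕ => ℝ) 1 →ₗ[ℝ] lp (fun _ : ℕ => ℝ) ∞)) ≤ n ∧ c = ‖S - A‖} :=
    le_csInf ⟨‖S - halfSumOp‖, ⟨halfSumOp, hfd, hrk, rfl⟩⟩ hlb
  have h3 := upper_bound S hS
  linarith
end

section
/- Let X be a Banach space with the metric lifting property and Y a Banach space with the metric extension property, and let T : X → Y be a bounded linear operator. Then for every n ∈ ℕ, the Kolmogorov numbers of T and of its adjoint coincide: δₙ(T*) = δₙ(T). -/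
open NormedSpace Metric Filter Topology
open scoped ENNReal Pointwise

/-- The Banach-space adjoint (dual) operator `T* : Y* → X*`, `(T* f)(x) = f (T x)`. -/
noncomputable def adjointCLM {X Y : Type*} [NormedAddCommGroup X] [NormedSpace ℝ X]
    [NormedAddCommGroup Y] [NormedSpace ℝ Y] (T : X →L[ℝ] Y) :
    StrongDual ℝ Y →L[ℝ] StrongDual ℝ X :=
  (ContinuousLinearMap.compSL X Y ℝ (RingHom.id ℝ) (RingHom.id ℝ)).flip T

/-- The canonical quotient map `Z → Z ⧸ G` as a continuous linear map. -/
noncomputable def quotCLM {Z : Type*} [NormedAddCommGroup Z] [NormedSpace ℝ Z]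
    (G : Submodule ℝ Z) : Z →L[ℝ] Z ⧸ G :=
  ⟨G.mkQ, continuous_quot_mk⟩

/-- The `n`-th Kolmogorov number: `δₙ(T) = inf {‖Q_G ∘ T‖ : G ⊆ Y, dim G ≤ n}`. -/
noncomputable def kolmogorovNumber {X Y : Type*} [NormedAddCommGroup X] [NormedSpace ℝ X]
    [NormedAddCommGroup Y] [NormedSpace ℝ Y] (n : ℕ) (T : X →L[ℝ] Y) : ℝ :=
  sInf {c : ℝ | ∃ G : Submodule ℝ Y, FiniteDimensional ℝ G ∧
    Module.finrank ℝ G ≤ n ∧ c = ‖(quotCLM G).comp T‖}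

/-- `X` has the metric lifting property: every operator into a quotient `Z ⧸ F` lifts,
with norm inflated by at most `1 + ε`. -/
def MetricLiftingProperty (X : Type u) [NormedAddCommGroup X] [NormedSpace ℝ X] : Prop :=
  ∀ (Z : Type u) [NormedAddCommGroup Z] [NormedSpace ℝ Z] [CompleteSpace Z]
    (F : Submodule ℝ Z), IsClosed (F : Set Z) →
    ∀ (T : X →L[ℝ] Z ⧸ F) (ε : ℝ), 0 < ε →
      ∃ S : X →L[ℝ] Z, (quotCLM F).comp S = T ∧ ‖S‖ ≤ (1 + ε) * ‖T‖

/-- `Y` has the metric extension property: every operator from a closed subspace `M ⊆ Z`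
into `Y` extends to `Z` with the same norm. -/
def MetricExtensionProperty (Y : Type v) [NormedAddCommGroup Y] [NormedSpace ℝ Y] : Prop :=
  ∀ (Z : Type v) [NormedAddCommGroup Z] [NormedSpace ℝ Z] [CompleteSpace Z]
    (M : Submodule ℝ Z), IsClosed (M : Set Z) →
    ∀ T : M →L[ℝ] Y, ∃ S : Z →L[ℝ] Y, (∀ m : M, S m = T m) ∧ ‖S‖ = ‖T‖

section AuxLemmas

variable {E F : Type*} [NormedAddCommGroup E] [NormedSpace ℝ E]
  [NormedAddCommGroup F] [NormedSpace ℝ F]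

lemma adjointCLM_apply' (T : E →L[ℝ] F) (f : StrongDual ℝ F) : adjointCLM T f = f.comp T := rfl

lemma norm_adjointCLM_le' (T : E →L[ℝ] F) : ‖adjointCLM T‖ ≤ ‖T‖ := by
  refine ContinuousLinearMap.opNorm_le_bound _ (norm_nonneg T) fun f => ?_
  rw [adjointCLM_apply', mul_comm]
  exact ContinuousLinearMap.opNorm_comp_le f T

lemma norm_quot_comp_le' (G : Submodule ℝ F) (T S : E →L[ℝ] F)
    (h : ∀ x, T x - S x ∈ G) : ‖(quotCLM G).comp T‖ ≤ ‖S‖ := by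
  refine ContinuousLinearMap.opNorm_le_bound _ (norm_nonneg S) fun x => ?_
  have h1 : (quotCLM G).comp T x = Submodule.Quotient.mk (S x) := by
    show (Submodule.Quotient.mk (T x) : F ⧸ G) = Submodule.Quotient.mk (S x)
    exact (Submodule.Quotient.eq G).mpr (h x)
  rw [h1]
  exact (Submodule.Quotient.norm_mk_le G (S x)).trans (S.le_opNorm x)

lemma apply_le_quot' (H : Submodule ℝ (StrongDual ℝ E)) (g : StrongDual ℝ E) (x : E)
    (hx : ∀ h ∈ H, h x = 0) : ‖g x‖ ≤ ‖quotCLM H g‖ * ‖x‖ := by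
  refine le_of_forall_pos_le_add fun ε hε => ?_
  have hδ : (0:ℝ) < ε / (‖x‖ + 1) := by positivity
  obtain ⟨g', hg', hn⟩ := Submodule.Quotient.norm_mk_lt (quotCLM H g) hδ
  have hmem : g' - g ∈ H := by
    rw [← Submodule.Quotient.eq H]
    exact hg'
  have hval : g' x = g x := by
    have := hx _ hmem
    simpa [sub_eq_zero] using this
  calc ‖g x‖ = ‖g' x‖ := by rw [hval]
    _ ≤ ‖g'‖ * ‖x‖ := g'.le_opNorm x
    _ ≤ (‖quotCLM H g‖ + ε / (‖x‖ + 1)) * ‖x‖ := by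
        apply mul_le_mul_of_nonneg_right hn.le (norm_nonneg x)
    _ ≤ ‖quotCLM H g‖ * ‖x‖ + ε := by
        have h1 : ε / (‖x‖ + 1) * ‖x‖ ≤ ε := by
          rw [div_mul_eq_mul_div, div_le_iff₀ (by positivity)]
          nlinarith [norm_nonneg x, hε.le]
        nlinarith [norm_nonneg x]

lemma norm_mk_comap' (π : E →L[ℝ] F) (hiso : ∀ z, ‖π z‖ = ‖z‖) (G : Submodule ℝ F)
    (hG : (G : Set F) ⊆ Set.range π) (z : E) :
    ‖(Submodule.Quotient.mk z : E ⧸ G.comap (π : E →ₗ[ℝ] F))‖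
      = ‖(Submodule.Quotient.mk (π z) : F ⧸ G)‖ := by
  refine le_antisymm ?_ ?_
  · refine le_of_forall_pos_le_add fun δ hδ => ?_
    obtain ⟨y', hy', hn⟩ :=
      Submodule.Quotient.norm_mk_lt (Submodule.Quotient.mk (π z) : F ⧸ G) hδ
    have hmem : y' - π z ∈ G := (Submodule.Quotient.eq G).mp hy'
    obtain ⟨w, hw⟩ := hG hmem
    have hy'' : y' = π (z + w) := by rw [map_add, hw]; abel
    have hmk : (Submodule.Quotient.mk (z + w) : E ⧸ G.comap (π : E →ₗ[ℝ] F))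
        = Submodule.Quotient.mk z := by
      rw [Submodule.Quotient.eq]
      have : π (z + w - z) ∈ G := by
        rw [map_sub, map_add, hw]
        simpa using hmem
      simpa [Submodule.mem_comap] using this
    calc ‖(Submodule.Quotient.mk z : E ⧸ G.comap (π : E →ₗ[ℝ] F))‖
        = ‖(Submodule.Quotient.mk (z + w) : E ⧸ G.comap (π : E →ₗ[ℝ] F))‖ := by rw [hmk]
      _ ≤ ‖z + w‖ := Submodule.Quotient.norm_mk_le _ _
      _ = ‖π (z + w)‖ := (hiso _).symm
      _ = ‖y'‖ := by rw [hy'']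
      _ ≤ ‖(Submodule.Quotient.mk (π z) : F ⧸ G)‖ + δ := hn.le
  · refine le_of_forall_pos_le_add fun δ hδ => ?_
    obtain ⟨z', hz', hn⟩ :=
      Submodule.Quotient.norm_mk_lt (Submodule.Quotient.mk z : E ⧸ G.comap (π : E →ₗ[ℝ] F)) hδ
    have hmem : z' - z ∈ G.comap (π : E →ₗ[ℝ] F) := by
      rw [← Submodule.Quotient.eq]
      exact hz'
    have hmk : (Submodule.Quotient.mk (π z) : F ⧸ G) = Submodule.Quotient.mk (π z') := by
      rw [Submodule.Quotient.eq]
      have := hmem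
      rw [Submodule.mem_comap] at this
      rw [map_sub] at this
      simpa using (neg_mem this : -(π z' - π z) ∈ G)
    calc ‖(Submodule.Quotient.mk (π z) : F ⧸ G)‖ = ‖(Submodule.Quotient.mk (π z') : F ⧸ G)‖ := by
          rw [hmk]
      _ ≤ ‖π z'‖ := Submodule.Quotient.norm_mk_le _ _
      _ = ‖z'‖ := hiso _
      _ ≤ ‖(Submodule.Quotient.mk z : E ⧸ G.comap (π : E →ₗ[ℝ] F))‖ + δ := hn.le

end AuxLemmas

lemma small_closure' {Y : Type*} [NormedAddCommGroup Y] (s : Set Y) [Small.{u} s] :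
    Small.{u} (closure s) := by
  have h : ∀ y : closure s, ∃ x : ℕ → Y, (∀ n, x n ∈ s) ∧ Tendsto x atTop (𝓝 (y : Y)) :=
    fun y => mem_closure_iff_seq_limit.mp y.2
  choose seq hseq hlim using h
  have hinj : Function.Injective (fun y : closure s => fun n => (⟨seq y n, hseq y n⟩ : s)) := by
    intro a b hab
    have : seq a = seq b := by
      funext n
      exact congrArg Subtype.val (congrFun hab n)
    exact Subtype.ext (tendsto_nhds_unique (hlim a) (this ▸ hlim b))
  exact small_of_injective hinj

/-- A space with the metric lifting property admits `(1+ε)`-lifts along quotients by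
finite-dimensional subspaces of complete spaces in **any** universe. -/
lemma lifting_univ' {X : Type u} [NormedAddCommGroup X] [NormedSpace ℝ X]
    (hX : MetricLiftingProperty X) {Y : Type v} [NormedAddCommGroup Y] [NormedSpace ℝ Y]
    [CompleteSpace Y] (T : X →L[ℝ] Y) (G : Submodule ℝ Y) [FiniteDimensional ℝ G]
    (hG : IsClosed (G : Set Y)) (ε : ℝ) (hε : 0 < ε) :
    ∃ S : X →L[ℝ] Y, (∀ x, T x - S x ∈ G) ∧ ‖S‖ ≤ (1 + ε) * ‖(quotCLM G).comp T‖ := by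
  classical
  -- the small submodule containing the range of `T` and `G`
  let Φ : (X × G) →ₗ[ℝ] Y :=
    { toFun := fun p => T p.1 + (p.2 : Y)
      map_add' := fun p q => by simp; abel
      map_smul' := fun c p => by simp [smul_add] }
  let D : Submodule ℝ Y := LinearMap.range Φ
  have hTD : ∀ x, T x ∈ D := fun x => ⟨(x, 0), by simp [Φ]⟩
  have hGD : ∀ g ∈ G, g ∈ D := fun g hg => ⟨(0, ⟨g, hg⟩), by simp [Φ]⟩
  let Y₀ : Submodule ℝ Y := D.topologicalClosure
  have hTY₀ : ∀ x, T x ∈ Y₀ := fun x => D.le_topologicalClosure (hTD x)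
  have hGY₀ : ∀ g ∈ G, g ∈ Y₀ := fun g hg => D.le_topologicalClosure (hGD g hg)
  -- smallness
  haveI hsmallG : Small.{u} G := small_map (Module.Basis.equivFun (Module.finBasis ℝ G)).toEquiv
  haveI hsmallD : Small.{u} D := by
    refine small_of_surjective (f := fun p : X × G => (⟨Φ p, LinearMap.mem_range_self Φ p⟩ : D)) ?_
    rintro ⟨-, p, rfl⟩
    exact ⟨p, rfl⟩
  haveI hsmallY₀ : Small.{u} Y₀ := by
    haveI : Small.{u} (closure (D : Set Y)) := small_closure' _
    refine small_of_injective (f := fun y : Y₀ =>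
      (⟨y.1, by simpa [Y₀, ← Submodule.topologicalClosure_coe] using y.2⟩ :
        closure (D : Set Y))) ?_
    intro a b hab
    exact Subtype.ext (congrArg Subtype.val hab)
  haveI : CompleteSpace Y₀ := (Submodule.isClosed_topologicalClosure D).completeSpace_coe
  -- the shrunk copy
  letI Z₁ : Type u := Shrink.{u} Y₀
  letI eLin : Z₁ ≃ₗ[ℝ] Y₀ := Shrink.linearEquiv ℝ Y₀
  have eiso : ∀ z : Z₁, ‖eLin z‖ = ‖z‖ := fun z => rfl
  letI eLi : Z₁ ≃ₗᵢ[ℝ] Y₀ := ⟨eLin, eiso⟩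
  haveI : CompleteSpace Z₁ := eLi.toIsometryEquiv.completeSpace
  letI π : Z₁ →L[ℝ] Y := Y₀.subtypeL.comp eLi.toLinearIsometry.toContinuousLinearMap
  have hπ : ∀ z, ‖π z‖ = ‖z‖ := fun z => eiso z
  have hπr : (G : Set Y) ⊆ Set.range π := by
    intro g hg
    refine ⟨eLi.symm ⟨g, hGY₀ g hg⟩, ?_⟩
    show ((eLi (eLi.symm ⟨g, hGY₀ g hg⟩) : Y₀) : Y) = g
    rw [LinearIsometryEquiv.apply_symm_apply]
  -- the quotient data
  letI Fq : Submodule ℝ Z₁ := G.comap (π : Z₁ →ₗ[ℝ] Y)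
  have hFclosed : IsClosed (Fq : Set Z₁) := by
    have : (Fq : Set Z₁) = π ⁻¹' (G : Set Y) := rfl
    rw [this]
    exact hG.preimage π.continuous
  letI T₀ : X →L[ℝ] Y₀ := T.codRestrict Y₀ hTY₀
  letI T' : X →L[ℝ] Z₁ ⧸ Fq :=
    (quotCLM Fq).comp ((eLi.symm.toLinearIsometry.toContinuousLinearMap).comp T₀)
  have hT'x : ∀ x, ‖T' x‖ = ‖(Submodule.Quotient.mk (T x) : Y ⧸ G)‖ := fun x => by
    have h1 : T' x = Submodule.Quotient.mk (eLi.symm (T₀ x)) := rfl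
    have h2 : π (eLi.symm (T₀ x)) = T x := by
      show ((eLi (eLi.symm (T₀ x)) : Y₀) : Y) = T x
      rw [LinearIsometryEquiv.apply_symm_apply]
      rfl
    rw [h1, norm_mk_comap' π hπ G hπr, h2]
  have hT' : ‖T'‖ ≤ ‖(quotCLM G).comp T‖ := by
    refine ContinuousLinearMap.opNorm_le_bound _ (norm_nonneg ((quotCLM G).comp T)) fun x => ?_
    rw [hT'x x]
    exact ((quotCLM G).comp T).le_opNorm x
  obtain ⟨u, hu, hun⟩ := hX Z₁ Fq hFclosed T' ε hε
  refine ⟨π.comp u, fun x => ?_, ?_⟩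
  · have h1 : Submodule.Quotient.mk (u x) = T' x := by
      have := congrArg (fun (W : X →L[ℝ] Z₁ ⧸ Fq) => W x) hu
      exact this
    have h1' : (Submodule.Quotient.mk (u x) : Z₁ ⧸ Fq)
        = Submodule.Quotient.mk (eLi.symm (T₀ x)) := h1
    have h2 : u x - eLi.symm (T₀ x) ∈ Fq := (Submodule.Quotient.eq Fq).mp h1'
    have h3 : π (u x - eLi.symm (T₀ x)) ∈ G := h2
    rw [map_sub] at h3
    have h4 : π (eLi.symm (T₀ x)) = T x := by
      show ((eLi (eLi.symm (T₀ x)) : Y₀) : Y) = T x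
      rw [LinearIsometryEquiv.apply_symm_apply]
      rfl
    rw [h4] at h3
    simpa using (neg_mem h3 : -(π (u x) - T x) ∈ G)
  · have h5 : ‖π.comp u‖ ≤ ‖u‖ := by
      refine ContinuousLinearMap.opNorm_le_bound _ (norm_nonneg u) fun x => ?_
      rw [ContinuousLinearMap.comp_apply, hπ]
      exact u.le_opNorm x
    refine h5.trans (hun.trans ?_)
    have h1ε : (0:ℝ) ≤ 1 + ε := by linarith
    exact mul_le_mul_of_nonneg_left hT' h1ε

/-- A space with the metric extension property admits norm-preserving extensions from
closed subspaces of complete spaces in **any** universe. -/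
lemma extension_univ' {Y : Type v} [NormedAddCommGroup Y] [NormedSpace ℝ Y] [CompleteSpace Y]
    (hY : MetricExtensionProperty Y) {X : Type u} [NormedAddCommGroup X] [NormedSpace ℝ X]
    (M : Submodule ℝ X) (R₀ : M →L[ℝ] Y) :
    ∃ S : X →L[ℝ] Y, (∀ m : M, S m = R₀ m) ∧ ‖S‖ ≤ ‖R₀‖ := by
  classical
  -- the index set and the sup-norm space
  letI I : Type v := {f : StrongDual ℝ Y // ‖f‖ ≤ 1}
  letI : TopologicalSpace I := ⊥
  haveI : DiscreteTopology I := ⟨rfl⟩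
  letI Z₂ : Type v := BoundedContinuousFunction I ℝ
  -- the canonical isometric embedding J : Y → Z₂
  letI Jfun : Y → Z₂ := fun y =>
    BoundedContinuousFunction.ofNormedAddCommGroup (fun f => f.1 y)
      continuous_of_discreteTopology ‖y‖
      (fun f => by
        calc ‖f.1 y‖ ≤ ‖f.1‖ * ‖y‖ := f.1.le_opNorm y
          _ ≤ 1 * ‖y‖ := by
              exact mul_le_mul_of_nonneg_right f.2 (norm_nonneg y)
          _ = ‖y‖ := one_mul _)
  have Jfun_apply : ∀ y f, Jfun y f = f.1 y := fun y f => rfl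
  have Jnorm : ∀ y, ‖Jfun y‖ = ‖y‖ := by
    intro y
    refine le_antisymm
      (BoundedContinuousFunction.norm_ofNormedAddCommGroup_le _ (norm_nonneg y) _) ?_
    rcases eq_or_ne y 0 with rfl | hy
    · rw [norm_zero]; exact norm_nonneg _
    · obtain ⟨g, hg1, hgy⟩ := exists_dual_vector ℝ y (norm_ne_zero_iff.mpr hy)
      have h1 : ‖Jfun y ⟨g, hg1.le⟩‖ ≤ ‖Jfun y‖ :=
        BoundedContinuousFunction.norm_coe_le_norm (Jfun y) _
      rw [Jfun_apply] at h1
      simp only [hgy] at h1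
      simpa using h1
  letI J : Y →ₗᵢ[ℝ] Z₂ :=
    { toFun := Jfun
      map_add' := fun y₁ y₂ => by
        ext f
        show f.1 (y₁ + y₂) = f.1 y₁ + f.1 y₂
        exact map_add f.1 y₁ y₂
      map_smul' := fun c y => by
        ext f
        show f.1 (c • y) = c • f.1 y
        exact map_smul f.1 c y
      norm_map' := Jnorm }
  letI M' : Submodule ℝ Z₂ := LinearMap.range J.toLinearMap
  have hM'closed : IsClosed (M' : Set Z₂) := by
    have h1 : (M' : Set Z₂) = Set.range J := by
      ext z
      exact Iff.rfl
    rw [h1]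
    exact J.isometry.isClosedEmbedding.isClosed_range
  letI W : M' →L[ℝ] Y := J.equivRange.symm.toLinearIsometry.toContinuousLinearMap
  obtain ⟨R, hRm, hRn⟩ := hY Z₂ M' hM'closed W
  have hRn1 : ‖R‖ ≤ 1 := by
    rw [hRn]
    refine ContinuousLinearMap.opNorm_le_bound _ zero_le_one fun m => ?_
    rw [one_mul]
    have : ‖W m‖ = ‖m‖ := J.equivRange.symm.toLinearIsometry.norm_map m
    rw [this]
  have hRJ : ∀ y, R (J y) = y := by
    intro y
    have hmem : (J y : Z₂) ∈ M' := ⟨y, rfl⟩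
    have h1 : R (J y) = W ⟨J y, hmem⟩ := hRm ⟨J y, hmem⟩
    rw [h1]
    show J.equivRange.symm ⟨J y, hmem⟩ = y
    apply J.equivRange.injective
    apply Subtype.ext
    rw [LinearIsometryEquiv.apply_symm_apply]
    rfl
  -- the coordinatewise Hahn-Banach extension of J ∘ R₀
  have hext : ∀ f : I, ∃ g : StrongDual ℝ X, (∀ m : M, g m = (f.1.comp R₀) m)
      ∧ ‖g‖ = ‖f.1.comp R₀‖ := fun f => exists_extension_norm_eq M (f.1.comp R₀)
  choose g hg hgn using hext
  have hgb : ∀ f : I, ‖g f‖ ≤ ‖R₀‖ := fun f => by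
    rw [hgn f]
    calc ‖f.1.comp R₀‖ ≤ ‖f.1‖ * ‖R₀‖ := ContinuousLinearMap.opNorm_comp_le _ _
      _ ≤ 1 * ‖R₀‖ := mul_le_mul_of_nonneg_right f.2 (norm_nonneg R₀)
      _ = ‖R₀‖ := one_mul _
  let Vlin : X →ₗ[ℝ] Z₂ :=
    { toFun := fun x => BoundedContinuousFunction.ofNormedAddCommGroup (fun f => g f x)
        continuous_of_discreteTopology (‖R₀‖ * ‖x‖)
        (fun f => ((g f).le_opNorm x).trans
          (mul_le_mul_of_nonneg_right (hgb f) (norm_nonneg x)))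
      map_add' := fun x₁ x₂ => by
        ext f
        show g f (x₁ + x₂) = g f x₁ + g f x₂
        exact map_add (g f) x₁ x₂
      map_smul' := fun c x => by
        ext f
        show g f (c • x) = c • g f x
        exact map_smul (g f) c x }
  have hVb : ∀ x, ‖Vlin x‖ ≤ ‖R₀‖ * ‖x‖ := fun x =>
    (BoundedContinuousFunction.norm_le (mul_nonneg (norm_nonneg R₀) (norm_nonneg x))).2
      (fun f => ((g f).le_opNorm x).trans
        (mul_le_mul_of_nonneg_right (hgb f) (norm_nonneg x)))
  let V : X →L[ℝ] Z₂ := Vlin.mkContinuous ‖R₀‖ hVb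
  have hVm : ∀ m : M, V m = J (R₀ m) := by
    intro m
    ext f
    show g f m = f.1 (R₀ m)
    exact hg f m
  have hVn : ‖V‖ ≤ ‖R₀‖ := Vlin.mkContinuous_norm_le (norm_nonneg R₀) hVb
  refine ⟨R.comp V, fun m => ?_, ?_⟩
  · rw [ContinuousLinearMap.comp_apply]
    show R (V m) = R₀ m
    rw [hVm m, hRJ]
  · calc ‖R.comp V‖ ≤ ‖R‖ * ‖V‖ := ContinuousLinearMap.opNorm_comp_le _ _
      _ ≤ 1 * ‖R₀‖ := mul_le_mul hRn1 hVn (norm_nonneg V) zero_le_one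
      _ = ‖R₀‖ := one_mul _

/-- Direction A: from a finite-dimensional subspace of `X*` produce one of `Y`. -/
lemma kolmogorov_dirA {X : Type u} {Y : Type v} [NormedAddCommGroup X] [NormedSpace ℝ X]
    [NormedAddCommGroup Y] [NormedSpace ℝ Y] [CompleteSpace Y]
    (hY : MetricExtensionProperty Y) (T : X →L[ℝ] Y) (n : ℕ)
    (H : Submodule ℝ (StrongDual ℝ X)) (hfin : FiniteDimensional ℝ H)
    (hrank : Module.finrank ℝ H ≤ n) :
    ∃ G : Submodule ℝ Y, FiniteDimensional ℝ G ∧ Module.finrank ℝ G ≤ n ∧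
      ‖(quotCLM G).comp T‖ ≤ ‖(quotCLM H).comp (adjointCLM T)‖ := by
  classical
  haveI := hfin
  set c := ‖(quotCLM H).comp (adjointCLM T)‖ with hc
  have hc0 : 0 ≤ c := norm_nonneg ((quotCLM H).comp (adjointCLM T))
  -- the pre-annihilator of H
  let ψ : X →ₗ[ℝ] Module.Dual ℝ H :=
    { toFun := fun x =>
        { toFun := fun f => f.1 x
          map_add' := fun f₁ f₂ => rfl
          map_smul' := fun a f => rfl }
      map_add' := fun x₁ x₂ => LinearMap.ext fun f => map_add f.1 x₁ x₂
      map_smul' := fun a x => LinearMap.ext fun f => map_smul f.1 a x }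
  let M : Submodule ℝ X := LinearMap.ker ψ
  have hMx : ∀ x ∈ M, ∀ f ∈ H, f x = 0 := by
    intro x hx f hf
    have h1 : ψ x = 0 := hx
    have := congrArg (fun (φ : Module.Dual ℝ H) => φ ⟨f, hf⟩) h1
    exact this
  have hMmem : ∀ x, (∀ f ∈ H, f x = 0) → x ∈ M := by
    intro x h
    show ψ x = 0
    exact LinearMap.ext fun f => h f.1 f.2
  have hMclosed : IsClosed (M : Set X) := by
    have hset : (M : Set X) = ⋂ (f : H), (f.1 ⁻¹' ({0} : Set ℝ)) := by
      ext x
      simp only [Set.mem_iInter, Set.mem_preimage, Set.mem_singleton_iff, SetLike.mem_coe]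
      constructor
      · intro hx f
        exact hMx x hx f.1 f.2
      · intro h
        exact hMmem x (fun f hf => h ⟨f, hf⟩)
    rw [hset]
    exact isClosed_iInter fun f => IsClosed.preimage f.1.continuous isClosed_singleton
  -- the quotient X ⧸ M is finite dimensional of dimension at most n
  let ψbar := M.liftQ ψ le_rfl
  have hinj : Function.Injective ψbar := by
    rw [← LinearMap.ker_eq_bot]
    exact Submodule.ker_liftQ_eq_bot _ _ _ le_rfl
  haveI : FiniteDimensional ℝ (Module.Dual ℝ H) :=
    Subspace.instModuleDualFiniteDimensional (K := ℝ) (V := H)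
  haveI hfinQ : FiniteDimensional ℝ (X ⧸ M) := FiniteDimensional.of_injective ψbar hinj
  have hrankQ : Module.finrank ℝ (X ⧸ M) ≤ n := by
    refine le_trans (LinearMap.finrank_le_finrank_of_injective hinj) ?_
    rw [Subspace.dual_finrank_eq (K := ℝ) (V := H)]
    exact hrank
  -- the restriction of T to M has norm at most c
  have hTM : ‖T.comp (Submodule.subtypeL M)‖ ≤ c := by
    refine ContinuousLinearMap.opNorm_le_bound _ hc0 fun m => ?_
    have key : ∀ f : StrongDual ℝ Y, ‖f (T m)‖ ≤ (c * ‖(m : X)‖) * ‖f‖ := by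
      intro f
      have h1 : ‖(adjointCLM T f) (m : X)‖ ≤ ‖quotCLM H (adjointCLM T f)‖ * ‖(m : X)‖ :=
        apply_le_quot' H (adjointCLM T f) m (fun h hh => hMx m.1 m.2 h hh)
      have h2 : ‖quotCLM H (adjointCLM T f)‖ ≤ c * ‖f‖ :=
        ((quotCLM H).comp (adjointCLM T)).le_opNorm f
      have h3 : (adjointCLM T f) (m : X) = f (T m) := rfl
      rw [h3] at h1
      calc ‖f (T m)‖ ≤ ‖quotCLM H (adjointCLM T f)‖ * ‖(m : X)‖ := h1
        _ ≤ (c * ‖f‖) * ‖(m : X)‖ := mul_le_mul_of_nonneg_right h2 (norm_nonneg _)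
        _ = (c * ‖(m : X)‖) * ‖f‖ := by ring
    have h4 := norm_le_dual_bound ℝ (T m) (by positivity) key
    exact h4
  -- extend T|M to all of X with norm ≤ c
  obtain ⟨S, hSm, hSn⟩ := extension_univ' hY M (T.comp (Submodule.subtypeL M))
  have hSn' : ‖S‖ ≤ c := hSn.trans hTM
  -- T - S vanishes on M, so has rank at most n
  have hker : M ≤ LinearMap.ker ((T - S : X →L[ℝ] Y) : X →ₗ[ℝ] Y) := by
    intro x hx
    have h1 : S x = T x := hSm ⟨x, hx⟩
    show (T - S) x = 0
    rw [ContinuousLinearMap.sub_apply, h1, sub_self]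
  let Abar := M.liftQ ((T - S : X →L[ℝ] Y) : X →ₗ[ℝ] Y) hker
  let G : Submodule ℝ Y := LinearMap.range ((T - S : X →L[ℝ] Y) : X →ₗ[ℝ] Y)
  have hrange : LinearMap.range Abar = G := Submodule.range_liftQ _ _ _
  haveI hGfin : FiniteDimensional ℝ G := by
    rw [← hrange]
    infer_instance
  have hGrank : Module.finrank ℝ G ≤ n := by
    rw [← hrange]
    exact (LinearMap.finrank_range_le Abar).trans hrankQ
  refine ⟨G, hGfin, hGrank, ?_⟩
  refine le_trans (norm_quot_comp_le' G T S (fun x => ?_)) hSn'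
  exact ⟨x, rfl⟩

/-- Direction B: from a finite-dimensional subspace of `Y` produce one of `X*`,
at the cost of a factor `1 + ε`. -/
lemma kolmogorov_dirB {X : Type u} {Y : Type v} [NormedAddCommGroup X] [NormedSpace ℝ X]
    [NormedAddCommGroup Y] [NormedSpace ℝ Y] [CompleteSpace Y]
    (hX : MetricLiftingProperty X) (T : X →L[ℝ] Y) (n : ℕ)
    (G : Submodule ℝ Y) (hfin : FiniteDimensional ℝ G)
    (hrank : Module.finrank ℝ G ≤ n) (ε : ℝ) (hε : 0 < ε) :
    ∃ H : Submodule ℝ (StrongDual ℝ X), FiniteDimensional ℝ H ∧ Module.finrank ℝ H ≤ n ∧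
      ‖(quotCLM H).comp (adjointCLM T)‖ ≤ (1 + ε) * ‖(quotCLM G).comp T‖ := by
  classical
  haveI := hfin
  have hGclosed : IsClosed (G : Set Y) := Submodule.closed_of_finiteDimensional G
  obtain ⟨S, hmem, hSn⟩ := lifting_univ' hX T G hGclosed ε hε
  let A₀ : X →L[ℝ] G := (T - S).codRestrict G (fun x => by
    rw [ContinuousLinearMap.sub_apply]
    exact hmem x)
  haveI hfd : FiniteDimensional ℝ (StrongDual ℝ G) :=
    (LinearMap.toContinuousLinearMap :
      ((G : Type v) →ₗ[ℝ] ℝ) ≃ₗ[ℝ] ((G : Type v) →L[ℝ] ℝ)).finiteDimensional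
  let H : Submodule ℝ (StrongDual ℝ X) :=
    LinearMap.range ((adjointCLM A₀ : StrongDual ℝ G →L[ℝ] StrongDual ℝ X) : StrongDual ℝ G →ₗ[ℝ] StrongDual ℝ X)
  have hHrank : Module.finrank ℝ H ≤ n := by
    have h1 : Module.finrank ℝ H ≤ Module.finrank ℝ (StrongDual ℝ G) :=
      LinearMap.finrank_range_le _
    have h2 : Module.finrank ℝ (StrongDual ℝ G) = Module.finrank ℝ G := by
      rw [← (LinearMap.toContinuousLinearMap :
        ((G : Type v) →ₗ[ℝ] ℝ) ≃ₗ[ℝ] ((G : Type v) →L[ℝ] ℝ)).finrank_eq]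
      exact Subspace.dual_finrank_eq
    exact le_trans h1 (h2 ▸ hrank)
  refine ⟨H, inferInstance, hHrank, ?_⟩
  have hm : ∀ f : StrongDual ℝ Y, adjointCLM T f - adjointCLM S f ∈ H := by
    intro f
    refine ⟨f.comp G.subtypeL, ?_⟩
    ext x
    show f ((A₀ x : Y)) = (adjointCLM T f - adjointCLM S f) x
    rw [ContinuousLinearMap.coe_codRestrict_apply]
    show f ((T - S) x) = f (T x) - f (S x)
    rw [ContinuousLinearMap.sub_apply, map_sub]
  refine le_trans (norm_quot_comp_le' H (adjointCLM T) (adjointCLM S) hm) ?_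
  exact le_trans (norm_adjointCLM_le' S) hSn

variable {X Y : Type*} [NormedAddCommGroup X] [NormedSpace ℝ X] [CompleteSpace X]
  [NormedAddCommGroup Y] [NormedSpace ℝ Y] [CompleteSpace Y]

/-- If `X` has the metric lifting property and `Y` the metric extension property, then
`δₙ(T*) = δₙ(T)` for every bounded operator `T : X → Y` and every `n`. -/
theorem kolmogorovNumber_adjoint_eq (hX : MetricLiftingProperty X)
    (hY : MetricExtensionProperty Y) (T : X →L[ℝ] Y) (n : ℕ) :
    kolmogorovNumber n (adjointCLM T) = kolmogorovNumber n T := by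
  classical
  set s₁ : Set ℝ := {c : ℝ | ∃ H : Submodule ℝ (StrongDual ℝ X), FiniteDimensional ℝ H ∧
    Module.finrank ℝ H ≤ n ∧ c = ‖(quotCLM H).comp (adjointCLM T)‖} with hs₁
  set s₂ : Set ℝ := {c : ℝ | ∃ G : Submodule ℝ Y, FiniteDimensional ℝ G ∧
    Module.finrank ℝ G ≤ n ∧ c = ‖(quotCLM G).comp T‖} with hs₂
  have h₁ : kolmogorovNumber n (adjointCLM T) = sInf s₁ := rfl
  have h₂ : kolmogorovNumber n T = sInf s₂ := rfl
  have hne₁ : s₁.Nonempty :=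
    ⟨‖(quotCLM (⊥ : Submodule ℝ (StrongDual ℝ X))).comp (adjointCLM T)‖,
      ⊥, inferInstance, by simp, rfl⟩
  have hne₂ : s₂.Nonempty :=
    ⟨‖(quotCLM (⊥ : Submodule ℝ Y)).comp T‖, ⊥, inferInstance, by simp, rfl⟩
  have hbdd₁ : BddBelow s₁ := ⟨0, by
    rintro c ⟨H, -, -, rfl⟩
    exact norm_nonneg ((quotCLM H).comp (adjointCLM T))⟩
  have hbdd₂ : BddBelow s₂ := ⟨0, by
    rintro c ⟨G, -, -, rfl⟩
    exact norm_nonneg ((quotCLM G).comp T)⟩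
  have h0₂ : 0 ≤ sInf s₂ := le_csInf hne₂ (by
    rintro c ⟨G, -, -, rfl⟩
    exact norm_nonneg ((quotCLM G).comp T))
  rw [h₁, h₂]
  refine le_antisymm ?_ ?_
  · -- sInf s₁ ≤ sInf s₂
    have key : ∀ ε : ℝ, 0 < ε → sInf s₁ ≤ (1 + ε) * sInf s₂ := by
      intro ε hε
      have hstep : ∀ c ∈ s₂, sInf s₁ / (1 + ε) ≤ c := by
        rintro c ⟨G, hGf, hGr, rfl⟩
        obtain ⟨H, hHf, hHr, hle⟩ := kolmogorov_dirB hX T n G hGf hGr ε hε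
        have h5 : sInf s₁ ≤ (1 + ε) * ‖(quotCLM G).comp T‖ :=
          (csInf_le hbdd₁ ⟨H, hHf, hHr, rfl⟩).trans hle
        rw [div_le_iff₀ (by linarith)]
        linarith [h5]
      have h6 : sInf s₁ / (1 + ε) ≤ sInf s₂ := le_csInf hne₂ hstep
      rw [div_le_iff₀ (by linarith)] at h6
      linarith [h6]
    refine le_of_forall_pos_le_add fun δ hδ => ?_
    have hε : 0 < δ / (sInf s₂ + 1) := by positivity
    have h7 := key _ hε
    have h8 : δ / (sInf s₂ + 1) * sInf s₂ ≤ δ := by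
      rw [div_mul_eq_mul_div, div_le_iff₀ (by linarith)]
      nlinarith
    nlinarith
  · -- sInf s₂ ≤ sInf s₁
    refine le_csInf hne₁ ?_
    rintro c ⟨H, hHf, hHr, rfl⟩
    obtain ⟨G, hGf, hGr, hle⟩ := kolmogorov_dirA hY T n H hHf hHr
    exact (csInf_le hbdd₂ ⟨G, hGf, hGr, rfl⟩).trans hle
end

section
/- Let X and Y be Banach spaces and T : X → Y a bounded linear operator. Then T is compact if and only if the symmetrized approximation numbers of T tend to zero: lim_{n→∞} τₙ(T) = 0. -/
open NormedSpace Metric Filter Topology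
open scoped ENNReal Pointwise

section Aux

variable {W Z : Type*} [NormedAddCommGroup W] [NormedSpace ℝ W]
  [NormedAddCommGroup Z] [NormedSpace ℝ Z]

private lemma kolmogorovSet_nonempty (n : ℕ) (S : W →L[ℝ] Z) :
    {c : ℝ | ∃ G : Submodule ℝ Z, FiniteDimensional ℝ G ∧
      Module.finrank ℝ G ≤ n ∧ c = ‖(quotCLM G).comp S‖}.Nonempty :=
  ⟨‖(quotCLM (⊥ : Submodule ℝ Z)).comp S‖, ⊥, inferInstance, by simp, rfl⟩

private lemma kolmogorovNumber_nonneg (n : ℕ) (S : W →L[ℝ] Z) :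
    0 ≤ kolmogorovNumber n S := by
  unfold kolmogorovNumber
  apply Real.sInf_nonneg
  rintro c ⟨G, -, -, hc⟩
  subst hc
  positivity

private lemma kolmogorovNumber_le (n : ℕ) (S : W →L[ℝ] Z) (G : Submodule ℝ Z)
    [FiniteDimensional ℝ G] (h : Module.finrank ℝ G ≤ n) :
    kolmogorovNumber n S ≤ ‖(quotCLM G).comp S‖ := by
  unfold kolmogorovNumber
  apply csInf_le
  · refine ⟨0, ?_⟩
    rintro c ⟨G', -, -, hc⟩
    subst hc
    positivity
  · exact ⟨G, inferInstance, h, rfl⟩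

/-- If the image of the unit ball is totally bounded, the Kolmogorov numbers tend to zero. -/
private lemma tendsto_kolmogorov_of_totallyBounded (S : W →L[ℝ] Z)
    (h : TotallyBounded (S '' closedBall 0 1)) :
    Tendsto (fun n : ℕ => kolmogorovNumber n S) atTop (nhds 0) := by
  rw [Metric.tendsto_atTop]
  intro ε hε
  obtain ⟨t, htf, hts⟩ := (Metric.totallyBounded_iff.1 h) (ε / 2) (by linarith)
  set G := Submodule.span ℝ t with hGdef
  haveI : FiniteDimensional ℝ G := FiniteDimensional.span_of_finite ℝ htf
  refine ⟨Module.finrank ℝ G, fun n hn => ?_⟩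
  have hQ : ‖(quotCLM G).comp S‖ ≤ ε / 2 := by
    refine ContinuousLinearMap.opNorm_le_of_unit_norm (by linarith) fun x hx => ?_
    have hxball : x ∈ closedBall (0 : W) 1 := by
      rw [mem_closedBall_zero_iff, hx]
    have : S x ∈ ⋃ y ∈ t, ball y (ε / 2) := hts ⟨x, hxball, rfl⟩
    simp only [Set.mem_iUnion, mem_ball] at this
    obtain ⟨y, hyt, hdy⟩ := this
    have hyG : y ∈ G := Submodule.subset_span hyt
    have h0 : (quotCLM G) y = 0 := (Submodule.Quotient.mk_eq_zero G).2 hyG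
    have : (quotCLM G).comp S x = (quotCLM G) (S x - y) := by
      rw [map_sub, h0, sub_zero]; rfl
    rw [this]
    calc ‖(quotCLM G) (S x - y)‖ ≤ ‖S x - y‖ := Submodule.Quotient.norm_mk_le G _
      _ ≤ ε / 2 := by rw [← dist_eq_norm]; linarith
  have hle := kolmogorovNumber_le n S G hn
  rw [Real.dist_eq, sub_zero, abs_of_nonneg (kolmogorovNumber_nonneg n S)]
  linarith

/-- If the Kolmogorov numbers tend to zero, the image of the unit ball is totally bounded. -/
private lemma totallyBounded_of_tendsto_kolmogorov (S : W →L[ℝ] Z)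
    (h : Tendsto (fun n : ℕ => kolmogorovNumber n S) atTop (nhds 0)) :
    TotallyBounded (S '' closedBall 0 1) := by
  rw [Metric.totallyBounded_iff]
  intro ε hε
  obtain ⟨N, hN⟩ := Metric.tendsto_atTop.1 h (ε / 4) (by linarith)
  have hlt : kolmogorovNumber N S < ε / 4 := by
    have := hN N le_rfl
    rw [Real.dist_eq, sub_zero] at this
    exact lt_of_abs_lt this
  unfold kolmogorovNumber at hlt
  obtain ⟨c, ⟨G, hGfd, -, rfl⟩, hc⟩ :=
    exists_lt_of_csInf_lt (kolmogorovSet_nonempty N S) hlt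
  haveI := hGfd
  -- every `S x`, `‖x‖ ≤ 1`, is within `ε/4` of a point of `G` of norm `≤ ‖S‖ + ε/4`
  have key : ∀ x ∈ closedBall (0 : W) 1,
      ∃ g ∈ G, ‖S x - g‖ < ε / 4 ∧ ‖g‖ ≤ ‖S‖ + ε / 4 := by
    intro x hx
    rw [mem_closedBall_zero_iff] at hx
    have hq : ‖(quotCLM G).comp S x‖ < ε / 4 := by
      calc ‖(quotCLM G).comp S x‖ ≤ ‖(quotCLM G).comp S‖ * ‖x‖ :=
            ContinuousLinearMap.le_opNorm _ x
        _ ≤ ‖(quotCLM G).comp S‖ :=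
            mul_le_of_le_one_right (ContinuousLinearMap.opNorm_nonneg _) hx
        _ < ε / 4 := hc
    have hpos : 0 < ε / 4 - ‖(quotCLM G).comp S x‖ := by linarith
    obtain ⟨m, hm, hmlt⟩ :=
      Submodule.Quotient.norm_mk_lt ((quotCLM G).comp S x) hpos
    have hmG : S x - m ∈ G := (Submodule.Quotient.eq G).mp hm.symm
    refine ⟨S x - m, hmG, ?_, ?_⟩
    · simpa using hmlt.trans_le (by linarith)
    · have h1 : ‖S x‖ ≤ ‖S‖ := by
        calc ‖S x‖ ≤ ‖S‖ * ‖x‖ := S.le_opNorm x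
          _ ≤ ‖S‖ := mul_le_of_le_one_right (norm_nonneg _) hx
      have h2 : ‖m‖ ≤ ε / 4 := le_of_lt (hmlt.trans_le (by linarith))
      calc ‖S x - m‖ ≤ ‖S x‖ + ‖m‖ := norm_sub_le _ _
        _ ≤ ‖S‖ + ε / 4 := add_le_add h1 h2
  -- a compact ball inside `G`
  haveI : ProperSpace G := FiniteDimensional.proper ℝ G
  have hK : IsCompact ((Subtype.val : G → Z) '' closedBall 0 (‖S‖ + ε / 4)) :=
    (isCompact_closedBall (0 : G) _).image continuous_subtype_val
  obtain ⟨u, huf, hus⟩ := Metric.totallyBounded_iff.1 hK.totallyBounded (ε / 2) (by linarith)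
  refine ⟨u, huf, ?_⟩
  rintro _ ⟨x, hx, rfl⟩
  obtain ⟨g, hgG, hg1, hg2⟩ := key x hx
  have hgK : g ∈ (Subtype.val : G → Z) '' closedBall 0 (‖S‖ + ε / 4) :=
    ⟨⟨g, hgG⟩, by rwa [mem_closedBall_zero_iff], rfl⟩
  have := hus hgK
  simp only [Set.mem_iUnion, mem_ball] at this
  obtain ⟨y, hyu, hdy⟩ := this
  simp only [Set.mem_iUnion, mem_ball]
  refine ⟨y, hyu, ?_⟩
  calc dist (S x) y ≤ dist (S x) g + dist g y := dist_triangle _ _ _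
    _ < ε / 4 + ε / 2 := by rw [dist_eq_norm]; exact add_lt_add_of_lt_of_lt hg1 hdy
    _ < ε := by linarith

end Aux

variable {X Y : Type*} [NormedAddCommGroup X] [NormedSpace ℝ X] [CompleteSpace X]
  [NormedAddCommGroup Y] [NormedSpace ℝ Y] [CompleteSpace Y]

/-- Refined Schauder theorem, part 1: `T` is compact iff its symmetrized approximation
numbers `τₙ(T) = δₙ(J_Y ∘ T)` tend to zero, where `J_Y : Y → ℓ^∞(B_{Y*})` is the
canonical isometric embedding `(J_Y y)(y*) = y*(y)`. -/
theorem isCompact_iff_tendsto_symmetrizedApproxNumber (T : X →L[ℝ] Y)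
    (J : Y →L[ℝ] lp (fun _ : {g : StrongDual ℝ Y // ‖g‖ ≤ 1} => ℝ) ∞)
    (hJ : ∀ (y : Y) (g : {g : StrongDual ℝ Y // ‖g‖ ≤ 1}), J y g = g.1 y) :
    IsCompact (closure (T '' closedBall 0 1)) ↔
      Tendsto (fun n : ℕ => kolmogorovNumber n (J.comp T)) atTop (nhds 0) := by
  have hJnorm : ∀ y : Y, ‖J y‖ = ‖y‖ := by
    intro y
    refine le_antisymm ?_ ?_
    · haveI : Nonempty {g : StrongDual ℝ Y // ‖g‖ ≤ 1} := ⟨⟨0, by simp⟩⟩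
      rw [lp.norm_eq_ciSup]
      refine ciSup_le fun g => ?_
      rw [hJ y g]
      calc ‖g.1 y‖ ≤ ‖g.1‖ * ‖y‖ := g.1.le_opNorm y
        _ ≤ 1 * ‖y‖ := mul_le_mul_of_nonneg_right g.2 (norm_nonneg y)
        _ = ‖y‖ := one_mul _
    · obtain ⟨g, hg1, hg2⟩ := exists_dual_vector'' ℝ y
      calc ‖y‖ = ‖J y ⟨g, hg1⟩‖ := by rw [hJ y ⟨g, hg1⟩, hg2]; exact (norm_norm y).symm
        _ ≤ ‖J y‖ := lp.norm_apply_le_norm ENNReal.top_ne_zero (J y) _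
  have hJiso : Isometry J := AddMonoidHomClass.isometry_of_norm J hJnorm
  have himg : (J.comp T) '' closedBall 0 1 = J '' (T '' closedBall 0 1) := by
    ext z
    simp only [Set.mem_image, ContinuousLinearMap.comp_apply]
    constructor
    · rintro ⟨x, hx, rfl⟩; exact ⟨T x, ⟨x, hx, rfl⟩, rfl⟩
    · rintro ⟨w, ⟨x, hx, rfl⟩, rfl⟩; exact ⟨x, hx, rfl⟩
  constructor
  · intro hcpt
    apply tendsto_kolmogorov_of_totallyBounded
    have h1 : TotallyBounded (T '' closedBall 0 1) :=
      hcpt.totallyBounded.subset subset_closure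
    rw [himg]
    exact h1.image J.uniformContinuous
  · intro h
    have hS := totallyBounded_of_tendsto_kolmogorov _ h
    rw [himg] at hS
    have h1 : TotallyBounded (T '' closedBall 0 1) :=
      (totallyBounded_image_iff hJiso.isUniformInducing).1 hS
    exact TotallyBounded.isCompact_of_isClosed h1.closure isClosed_closure
end

section
/- Let X be a Banach space with the metric lifting property, Y an arbitrary Banach space, and T : X → Y a bounded linear operator. Then for every n ∈ ℕ, αₙ(T) = δₙ(T). -/
open NormedSpace Metric Filter Topology
open scoped ENNReal Pointwise

variable {X Y : Type*} [NormedAddCommGroup X] [NormedSpace ℝ X] [CompleteSpace X]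
  [NormedAddCommGroup Y] [NormedSpace ℝ Y] [CompleteSpace Y]

universe u v

lemma key_lemma {X : Type u} {Y : Type v} [NormedAddCommGroup X] [NormedSpace ℝ X]
    [NormedAddCommGroup Y] [NormedSpace ℝ Y] [CompleteSpace Y]
    (hX : MetricLiftingProperty X) (T : X →L[ℝ] Y) (G : Submodule ℝ Y)
    (hG : FiniteDimensional ℝ G) (ε : ℝ) (hε : 0 < ε) :
    ∃ S' : X →L[ℝ] Y, (quotCLM G).comp S' = (quotCLM G).comp T ∧
      ‖S'‖ ≤ (1 + ε) * ‖(quotCLM G).comp T‖ := by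
  classical
  haveI := hG
  haveI hGclosed : IsClosed (G : Set Y) := Submodule.closed_of_finiteDimensional G
  -- the subspace W̄ : closure of range T ⊔ G
  set W₀ : Submodule ℝ Y := LinearMap.range (T : X →ₗ[ℝ] Y) ⊔ G with hW₀
  set W : Submodule ℝ Y := W₀.topologicalClosure with hW
  have hWclosed : IsClosed (W : Set Y) := W₀.isClosed_topologicalClosure
  haveI : CompleteSpace W := hWclosed.completeSpace_coe
  have hTW : ∀ x : X, T x ∈ W := fun x =>
    W₀.le_topologicalClosure (Submodule.mem_sup_left ⟨x, rfl⟩)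
  have hGW : G ≤ W := le_trans le_sup_right W₀.le_topologicalClosure
  -- smallness of W
  haveI hsmallG : Small.{u} G := by
    have e := (Module.finBasis ℝ G).equivFun
    exact small_of_injective e.injective
  haveI hsmallW : Small.{u} W := by
    have hsurj : ∃ f : (ℕ → X × G) → W, Function.Surjective f := by
      refine ⟨fun s => if h : ∃ w : W, Tendsto (fun n => T (s n).1 + ((s n).2 : Y)) atTop (𝓝 (w : Y)) then h.choose else 0, fun w => ?_⟩
      have hwmem : (w : Y) ∈ closure (W₀ : Set Y) := by
        rw [← Submodule.topologicalClosure_coe]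
        exact w.2
      rw [mem_closure_iff_seq_limit] at hwmem
      obtain ⟨y, hy, hylim⟩ := hwmem
      have hchoice : ∀ n, ∃ p : X × G, T p.1 + (p.2 : Y) = y n := by
        intro n
        obtain ⟨a, ha, b, hb, hab⟩ := Submodule.mem_sup.mp (hy n)
        obtain ⟨x, hx⟩ := ha
        exact ⟨(x, ⟨b, hb⟩), by rw [← hab, ← hx]; rfl⟩
      choose s hs using hchoice
      have hex : ∃ w' : W, Tendsto (fun n => T (s n).1 + ((s n).2 : Y)) atTop (𝓝 (w' : Y)) :=
        ⟨w, by simpa [hs] using hylim⟩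
      refine ⟨s, ?_⟩
      dsimp only
      rw [dif_pos hex]
      exact Subtype.ext (tendsto_nhds_unique hex.choose_spec (by simpa [hs] using hylim))
    obtain ⟨f, hf⟩ := hsurj
    exact small_of_surjective hf
  -- the shrunk space
  set e : Shrink.{u} W ≃ₗ[ℝ] W := Shrink.linearEquiv ℝ W with he
  have hnorm : ∀ z : Shrink.{u} W, ‖z‖ = ‖e z‖ := fun z => rfl
  have hisom : Isometry e := AddMonoidHomClass.isometry_of_norm e.toLinearMap (fun z => (hnorm z).symm)
  haveI : CompleteSpace (Shrink.{u} W) := by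
    have : IsUniformEmbedding e := hisom.isUniformEmbedding
    exact (completeSpace_congr (e := e.toEquiv) this).mpr inferInstance
  -- the continuous inclusion of the shrunk space into Y
  set eC : Shrink.{u} W →L[ℝ] W :=
    ⟨e.toLinearMap, hisom.continuous⟩ with heC
  set κ : Shrink.{u} W →L[ℝ] Y ⧸ G := (quotCLM G).comp (W.subtypeL.comp eC) with hκ
  set F : Submodule ℝ (Shrink.{u} W) := LinearMap.ker (κ : Shrink.{u} W →ₗ[ℝ] Y ⧸ G) with hF
  have hFclosed : IsClosed (F : Set (Shrink.{u} W)) := ContinuousLinearMap.isClosed_ker κ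
  have hκapp : ∀ z : Shrink.{u} W, κ z = Submodule.Quotient.mk ((e z : Y)) := fun z => rfl
  -- key norm inequality
  have keynorm : ∀ z : Shrink.{u} W,
      ‖(Submodule.Quotient.mk z : Shrink.{u} W ⧸ F)‖ ≤ ‖κ z‖ := by
    intro z
    refine le_of_forall_pos_le_add (fun δ hδ => ?_)
    obtain ⟨y, hy, hylt⟩ := Submodule.Quotient.norm_mk_lt (κ z) hδ
    rw [hκapp] at hy
    have hyG : y - (e z : Y) ∈ G := (Submodule.Quotient.eq G).mp hy
    have hyW : y ∈ W := by
      have : (y - (e z : Y)) + (e z : Y) ∈ W := W.add_mem (hGW hyG) (e z).2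
      simpa using this
    set z' : Shrink.{u} W := e.symm ⟨y, hyW⟩ with hz'
    have hmk : (Submodule.Quotient.mk z' : Shrink.{u} W ⧸ F) = Submodule.Quotient.mk z := by
      rw [Submodule.Quotient.eq]
      show z' - z ∈ LinearMap.ker (κ : Shrink.{u} W →ₗ[ℝ] Y ⧸ G)
      rw [LinearMap.mem_ker]
      have : κ z' - κ z = 0 := by
        rw [hκapp, hκapp, hz']
        simp only [LinearEquiv.apply_symm_apply]
        rw [← Submodule.Quotient.mk_sub]
        exact (Submodule.Quotient.mk_eq_zero G).mpr hyG
      rw [← map_sub] at this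
      exact this
    calc ‖(Submodule.Quotient.mk z : Shrink.{u} W ⧸ F)‖
        = ‖(Submodule.Quotient.mk z' : Shrink.{u} W ⧸ F)‖ := by rw [hmk]
      _ ≤ ‖z'‖ := Submodule.Quotient.norm_mk_le F z'
      _ = ‖(⟨y, hyW⟩ : W)‖ := by rw [hz', hnorm, LinearEquiv.apply_symm_apply]
      _ = ‖y‖ := rfl
      _ ≤ ‖κ z‖ + δ := hylt.le
  -- the lifted operator into the quotient of the shrunk space
  set T' : X →L[ℝ] Y ⧸ G := (quotCLM G).comp T with hT'
  have hT'app : ∀ x : X, T' x = Submodule.Quotient.mk (T x) := fun x => rfl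
  set j : X →ₗ[ℝ] W := (T : X →ₗ[ℝ] Y).codRestrict W hTW with hj
  set Ttl : X →ₗ[ℝ] (Shrink.{u} W ⧸ F) :=
    F.mkQ ∘ₗ (e.symm.toLinearMap ∘ₗ j) with hTtl
  have hTtlapp : ∀ x : X, Ttl x = Submodule.Quotient.mk (e.symm ⟨T x, hTW x⟩) := fun x => rfl
  have hTtlbound : ∀ x : X, ‖Ttl x‖ ≤ ‖T'‖ * ‖x‖ := by
    intro x
    rw [hTtlapp]
    refine le_trans (keynorm _) ?_
    have : κ (e.symm ⟨T x, hTW x⟩) = T' x := by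
      rw [hκapp]
      simp only [LinearEquiv.apply_symm_apply]
      rfl
    rw [this]
    exact T'.le_opNorm x
  set Tt : X →L[ℝ] (Shrink.{u} W ⧸ F) := Ttl.mkContinuous ‖T'‖ hTtlbound with hTt
  have hTtnorm : ‖Tt‖ ≤ ‖T'‖ := Ttl.mkContinuous_norm_le (norm_nonneg T') hTtlbound
  -- apply the metric lifting property
  obtain ⟨S, hQS, hSnorm⟩ := hX (Shrink.{u} W) F hFclosed Tt ε hε
  set S' : X →L[ℝ] Y := W.subtypeL.comp (eC.comp S) with hS'
  have hS'app : ∀ x : X, S' x = ((e (S x) : W) : Y) := fun x => rfl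
  refine ⟨S', ?_, ?_⟩
  · ext x
    have h1 : (Submodule.Quotient.mk (S x) : Shrink.{u} W ⧸ F) = Tt x := by
      have := congrArg (fun f : X →L[ℝ] Shrink.{u} W ⧸ F => f x) hQS
      exact this
    rw [hTt] at h1
    have h2 : (Submodule.Quotient.mk (S x) : Shrink.{u} W ⧸ F)
        = Submodule.Quotient.mk (e.symm ⟨T x, hTW x⟩) := by
      rw [h1]; exact hTtlapp x
    have h3 : S x - e.symm ⟨T x, hTW x⟩ ∈ LinearMap.ker (κ : Shrink.{u} W →ₗ[ℝ] Y ⧸ G) := (Submodule.Quotient.eq F).mp h2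
    rw [LinearMap.mem_ker, map_sub, sub_eq_zero, ContinuousLinearMap.coe_coe] at h3
    have h4 : κ (e.symm ⟨T x, hTW x⟩) = Submodule.Quotient.mk (T x) := by
      rw [hκapp]
      simp only [LinearEquiv.apply_symm_apply]
    show Submodule.Quotient.mk (S' x) = Submodule.Quotient.mk (T x)
    rw [← h4, ← h3]
    rfl
  · have hS'le : ‖S'‖ ≤ ‖S‖ := by
      refine S'.opNorm_le_bound (norm_nonneg S) (fun x => ?_)
      have : ‖S' x‖ = ‖S x‖ := by rw [hS'app]; exact (hnorm (S x)).symm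
      rw [this]
      exact S.le_opNorm x
    calc ‖S'‖ ≤ ‖S‖ := hS'le
      _ ≤ (1 + ε) * ‖Tt‖ := hSnorm
      _ ≤ (1 + ε) * ‖T'‖ := by
          exact mul_le_mul_of_nonneg_left hTtnorm (by linarith)

/-- If `X` has the metric lifting property, then `αₙ(T) = δₙ(T)` for every operator
`T : X → Y` into an arbitrary Banach space `Y`. -/
theorem approxNumber_eq_kolmogorovNumber (hX : MetricLiftingProperty X)
    (T : X →L[ℝ] Y) (n : ℕ) :
    approxNumber n T = kolmogorovNumber n T := by
  unfold approxNumber kolmogorovNumber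
  have hApne : ({c : ℝ | ∃ A : X →L[ℝ] Y, FiniteDimensional ℝ (LinearMap.range (A : X →ₗ[ℝ] Y)) ∧
      Module.finrank ℝ (LinearMap.range (A : X →ₗ[ℝ] Y)) ≤ n ∧ c = ‖T - A‖}).Nonempty := by
    refine ⟨‖T - 0‖, 0, ?_, ?_, rfl⟩
    · rw [show LinearMap.range ((0 : X →L[ℝ] Y) : X →ₗ[ℝ] Y) = ⊥ from LinearMap.range_zero]
      infer_instance
    · rw [show LinearMap.range ((0 : X →L[ℝ] Y) : X →ₗ[ℝ] Y) = ⊥ from LinearMap.range_zero]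
      simp
  have hKne : ({c : ℝ | ∃ G : Submodule ℝ Y, FiniteDimensional ℝ G ∧
      Module.finrank ℝ G ≤ n ∧ c = ‖(quotCLM G).comp T‖}).Nonempty := by
    exact ⟨‖(quotCLM (⊥ : Submodule ℝ Y)).comp T‖, ⊥, inferInstance, by simp, rfl⟩
  have hAbdd : BddBelow {c : ℝ | ∃ A : X →L[ℝ] Y, FiniteDimensional ℝ (LinearMap.range (A : X →ₗ[ℝ] Y)) ∧
      Module.finrank ℝ (LinearMap.range (A : X →ₗ[ℝ] Y)) ≤ n ∧ c = ‖T - A‖} := by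
    refine ⟨0, fun c hc => ?_⟩
    obtain ⟨A, -, -, rfl⟩ := hc
    exact norm_nonneg _
  have hKbdd : BddBelow {c : ℝ | ∃ G : Submodule ℝ Y, FiniteDimensional ℝ G ∧
      Module.finrank ℝ G ≤ n ∧ c = ‖(quotCLM G).comp T‖} := by
    refine ⟨0, fun c hc => ?_⟩
    obtain ⟨G, -, -, rfl⟩ := hc
    exact ContinuousLinearMap.opNorm_nonneg _
  refine le_antisymm ?_ ?_
  · -- approx ≤ kolmogorov
    refine le_csInf hKne ?_
    rintro c ⟨G, hfd, hrk, hcdef⟩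
    have hc0 : 0 ≤ c := hcdef ▸ ContinuousLinearMap.opNorm_nonneg _
    refine le_of_forall_pos_le_add (fun δ hδ => ?_)
    set ε : ℝ := δ / (c + 1) with hεdef
    have hε : 0 < ε := div_pos hδ (by linarith)
    obtain ⟨S', hQ, hS'⟩ := key_lemma hX T G hfd ε hε
    rw [← hcdef] at hS'
    set A : X →L[ℝ] Y := T - S' with hA
    have hle : LinearMap.range (A : X →ₗ[ℝ] Y) ≤ G := by
      rintro y ⟨x, rfl⟩
      have := congrArg (fun f : X →L[ℝ] Y ⧸ G => f x) hQ
      rw [← Submodule.Quotient.mk_eq_zero G]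
      show (Submodule.Quotient.mk (T x - S' x) : Y ⧸ G) = 0
      rw [Submodule.Quotient.mk_sub]
      rw [sub_eq_zero]
      exact (this.symm : _)
    haveI hfdA : FiniteDimensional ℝ (LinearMap.range (A : X →ₗ[ℝ] Y)) :=
      Submodule.finiteDimensional_of_le hle
    have hrkA : Module.finrank ℝ (LinearMap.range (A : X →ₗ[ℝ] Y)) ≤ n :=
      le_trans (Submodule.finrank_mono hle) hrk
    have hTA : T - A = S' := sub_sub_cancel T S'
    have hmem : ‖T - A‖ ∈ {c : ℝ | ∃ A : X →L[ℝ] Y,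
        FiniteDimensional ℝ (LinearMap.range (A : X →ₗ[ℝ] Y)) ∧
        Module.finrank ℝ (LinearMap.range (A : X →ₗ[ℝ] Y)) ≤ n ∧ c = ‖T - A‖} := ⟨A, hfdA, hrkA, rfl⟩
    refine le_trans (csInf_le hAbdd hmem) ?_
    rw [hTA]
    have hεc : ε * c ≤ δ := by
      rw [hεdef, div_mul_eq_mul_div, div_le_iff₀ (by linarith : (0:ℝ) < c + 1)]
      nlinarith
    calc ‖S'‖ ≤ (1 + ε) * c := hS'
      _ = c + ε * c := by ring
      _ ≤ c + δ := by linarith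
  · -- kolmogorov ≤ approx
    refine le_csInf hApne ?_
    rintro c ⟨A, hfd, hrk, rfl⟩
    have hQT : ‖(quotCLM (LinearMap.range (A : X →ₗ[ℝ] Y))).comp T‖ ≤ ‖T - A‖ := by
      have heq : (quotCLM (LinearMap.range (A : X →ₗ[ℝ] Y))).comp T
          = (quotCLM (LinearMap.range (A : X →ₗ[ℝ] Y))).comp (T - A) := by
        ext x
        show (Submodule.Quotient.mk (T x) : Y ⧸ LinearMap.range (A : X →ₗ[ℝ] Y))
          = Submodule.Quotient.mk (T x - A x)
        rw [Submodule.Quotient.eq]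
        simpa using ⟨x, rfl⟩
      rw [heq]
      refine ContinuousLinearMap.opNorm_le_bound _ (norm_nonneg _) (fun x => ?_)
      refine le_trans (Submodule.Quotient.norm_mk_le _ _) ?_
      exact (T - A).le_opNorm x
    exact csInf_le_of_le hKbdd ⟨LinearMap.range (A : X →ₗ[ℝ] Y), hfd, hrk, rfl⟩ hQT
end

section
/- Let X and Y be Banach spaces and T : X → Y a compact bounded linear operator. Then for every n ∈ ℕ, the n-th Gelfand number of the adjoint equals the n-th Kolmogorov number of T: cₙ(T*) = δₙ(T). -/
open NormedSpace Metric Filter Topology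
open scoped ENNReal Pointwise

/-- The `n`-th Gelfand number: `cₙ(T) = inf {ε > 0 : ∃ a₁,…,aₙ ∈ X*,
    ‖T x‖ ≤ max_i |aᵢ(x)| + ε ‖x‖ for all x}`. -/
noncomputable def gelfandNumber {X Y : Type*} [NormedAddCommGroup X] [NormedSpace ℝ X]
    [NormedAddCommGroup Y] [NormedSpace ℝ Y] (n : ℕ) (T : X →L[ℝ] Y) : ℝ :=
  sInf {ε : ℝ | 0 < ε ∧ ∃ a : Fin n → StrongDual ℝ X,
    ∀ x : X, ‖T x‖ ≤ (⨆ i, |a i x|) + ε * ‖x‖}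

variable {X Y : Type*} [NormedAddCommGroup X] [NormedSpace ℝ X] [CompleteSpace X]
  [NormedAddCommGroup Y] [NormedSpace ℝ Y] [CompleteSpace Y]

section Aux

variable {Y : Type*} [NormedAddCommGroup Y] [NormedSpace ℝ Y]

lemma unit_opNorm_le {E F : Type*} [NormedAddCommGroup E] [NormedSpace ℝ E]
    [SeminormedAddCommGroup F] [NormedSpace ℝ F] (g : E →L[ℝ] F) {C : ℝ} (hC : 0 ≤ C)
    (h : ∀ x, ‖x‖ ≤ 1 → ‖g x‖ ≤ C) : ‖g‖ ≤ C := by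
  refine g.opNorm_le_bound hC fun x => ?_
  rcases eq_or_ne x 0 with rfl | hx
  · simp [hC]
  · have hxn : 0 < ‖x‖ := norm_pos_iff.2 hx
    have h1 : ‖(‖x‖⁻¹ • x)‖ ≤ 1 := by
      rw [norm_smul, norm_inv, norm_norm, inv_mul_cancel₀ hxn.ne']
    have h2 := h _ h1
    rw [map_smul, norm_smul, norm_inv, norm_norm] at h2
    have h3 := mul_le_mul_of_nonneg_left h2 hxn.le
    rw [← mul_assoc, mul_inv_cancel₀ hxn.ne', one_mul] at h3
    linarith [h3, mul_comm ‖x‖ C]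

lemma stepA {n : ℕ} (a : Fin n → StrongDual ℝ (StrongDual ℝ Y)) (z : Y) {ε : ℝ} (hε : 0 < ε)
    (h : ∀ f : StrongDual ℝ Y, ‖f‖ ≤ 1 → f z ≤ (⨆ i, |a i f|) + ε) :
    ∃ lam : Fin n → ℝ, ∀ f : StrongDual ℝ Y, f z ≤ (∑ i, lam i * a i f) + ε * ‖f‖ := by
  classical
  set D : Set ((Fin n → ℝ) × ℝ) :=
    (fun f : StrongDual ℝ Y => ((fun i => a i f), f z - ε)) '' closedBall 0 1 with hD
  set V : Set ((Fin n → ℝ) × ℝ) := {p | ‖p.1‖ < p.2} with hV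
  have hVopen : IsOpen V := isOpen_lt (continuous_fst.norm) continuous_snd
  have hVconv : Convex ℝ V := by
    intro p hp q hq α β hα hβ hαβ
    simp only [hV, Set.mem_setOf_eq] at hp hq ⊢
    have hle : ‖(α • p + β • q).1‖ ≤ α * ‖p.1‖ + β * ‖q.1‖ := by
      refine (norm_add_le _ _).trans ?_
      simp [norm_smul, abs_of_nonneg hα, abs_of_nonneg hβ]
    have hsnd : (α • p + β • q).2 = α * p.2 + β * q.2 := rfl
    rw [hsnd]
    rcases eq_or_lt_of_le hα with h0 | hα'
    · have hβ1 : β = 1 := by rw [← h0] at hαβ; linarith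
      rw [← h0, hβ1] at hle ⊢
      refine lt_of_le_of_lt hle ?_
      have : (1:ℝ) * ‖q.1‖ < 1 * q.2 := by simpa using hq
      linarith
    · have h1 : α * ‖p.1‖ < α * p.2 := mul_lt_mul_of_pos_left hp hα'
      have h2 : β * ‖q.1‖ ≤ β * q.2 := mul_le_mul_of_nonneg_left hq.le hβ
      linarith
  have hdisj : Disjoint V D := by
    rw [Set.disjoint_left]
    rintro p hpV ⟨f, hf, rfl⟩
    rw [mem_closedBall_zero_iff] at hf
    have h1 : f z - ε ≤ ⨆ i, |a i f| := by linarith [h f hf]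
    have h2 : (⨆ i, |a i f|) ≤ ‖(fun i => a i f : Fin n → ℝ)‖ :=
      Real.iSup_le (fun i => by
        simpa [Real.norm_eq_abs] using norm_le_pi_norm (fun i => a i f) i) (norm_nonneg _)
    simp only [hV, Set.mem_setOf_eq] at hpV
    linarith
  have hDconv : Convex ℝ D := by
    rintro p ⟨f, hf, rfl⟩ q ⟨g, hg, rfl⟩ α β hα hβ hαβ
    refine ⟨α • f + β • g, convex_closedBall 0 1 hf hg hα hβ hαβ, ?_⟩
    have h1 : ∀ i, a i (α • f + β • g) = α * a i f + β * a i g := by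
      intro i; rw [map_add, map_smul, map_smul]; rfl
    have h2 : (α • f + β • g) z = α * f z + β * g z := rfl
    refine Prod.ext ?_ ?_
    · funext i
      simp only [h1 i]
      rfl
    · simp only [h2]
      show α * f z + β * g z - ε = α * (f z - ε) + β * (g z - ε)
      have : α * ε + β * ε = ε := by rw [← add_mul, hαβ, one_mul]
      ring_nf
      linarith [this]
  obtain ⟨φ, u, hVu, hDu⟩ := geometric_hahn_banach_open hVconv hVopen hDconv hdisj
  have hVsmul : ∀ p ∈ V, ∀ r : ℝ, 0 < r → r • p ∈ V := by
    intro p hp r hr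
    simp only [hV, Set.mem_setOf_eq] at hp ⊢
    have : ‖(r • p).1‖ = r * ‖p.1‖ := by
      show ‖r • p.1‖ = r * ‖p.1‖
      rw [norm_smul, Real.norm_eq_abs, abs_of_pos hr]
    rw [this]
    exact mul_lt_mul_of_pos_left hp hr
  have hφle : ∀ p ∈ V, φ p ≤ 0 := by
    intro p hp
    by_contra hpos
    push_neg at hpos
    have hr : 0 < (|u| + 1) / φ p := by positivity
    have h1 := hVu _ (hVsmul p hp _ hr)
    rw [map_smul, smul_eq_mul, div_mul_cancel₀ _ hpos.ne'] at h1
    linarith [le_abs_self u]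
  have hv0 : ((0 : Fin n → ℝ), (1 : ℝ)) ∈ V := by simp [hV]
  have hu0 : 0 ≤ u := by
    by_contra hu
    push_neg at hu
    have hφv0 := hφle _ hv0
    rcases eq_or_lt_of_le hφv0 with heq | hlt
    · linarith [hVu _ hv0]
    · have hr : 0 < u / (2 * φ ((0 : Fin n → ℝ), (1 : ℝ))) := div_pos_of_neg_of_neg hu (by linarith)
      have h1 := hVu _ (hVsmul _ hv0 _ hr)
      rw [map_smul, smul_eq_mul] at h1
      have h2 : u / (2 * φ ((0 : Fin n → ℝ), (1 : ℝ))) * φ ((0 : Fin n → ℝ), (1 : ℝ))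
          = u / 2 := by
        field_simp [ne_of_lt hlt]
      rw [h2] at h1
      linarith
  set c1 : ℝ := φ ((0 : Fin n → ℝ), (1 : ℝ)) with hc1
  have hc1le : c1 ≤ 0 := hφle _ hv0
  have hsingle : ∀ (i : Fin n) (c : ℝ),
      (Pi.single i c : Fin n → ℝ) = c • (Pi.single i (1:ℝ) : Fin n → ℝ) := by
    intro i c
    rw [← Pi.single_smul, smul_eq_mul, mul_one]
  have hdec : ∀ (w : Fin n → ℝ) (s : ℝ),
      φ (w, s) = (∑ i, w i * φ (Pi.single i 1, 0)) + s * c1 := by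
    intro w s
    have e1 : ((w, s) : (Fin n → ℝ) × ℝ)
        = (∑ i, ((Pi.single i (w i) : Fin n → ℝ), (0:ℝ))) + s • ((0 : Fin n → ℝ), (1 : ℝ)) := by
      rw [Prod.ext_iff]
      refine ⟨?_, ?_⟩
      · show w = (∑ i, ((Pi.single i (w i) : Fin n → ℝ), (0:ℝ))).1 + s • (0 : Fin n → ℝ)
        rw [smul_zero, add_zero, Prod.fst_sum]
        conv_lhs => rw [← Finset.univ_sum_single w]
      · show s = (∑ i, ((Pi.single i (w i) : Fin n → ℝ), (0:ℝ))).2 + s • (1 : ℝ)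
        rw [smul_eq_mul, mul_one, Prod.snd_sum]
        simp
    rw [e1, map_add, map_sum, map_smul, smul_eq_mul]
    congr 1
    refine Finset.sum_congr rfl fun i _ => ?_
    have hterm : ((Pi.single i (w i) : Fin n → ℝ), (0:ℝ))
        = (w i) • ((Pi.single i (1:ℝ) : Fin n → ℝ), (0:ℝ)) := by
      rw [Prod.smul_mk, hsingle i (w i), smul_zero]
    rw [hterm, map_smul, smul_eq_mul]
  have hc1neg : c1 < 0 := by
    rcases eq_or_lt_of_le hc1le with heq | hlt
    swap
    · exact hlt
    exfalso
    have hψ : ∀ w : Fin n → ℝ, φ (w, 0) ≤ 0 := by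
      intro w
      have hmem : ((w, ‖w‖ + 1) : (Fin n → ℝ) × ℝ) ∈ V := by
        simp only [hV, Set.mem_setOf_eq]; linarith
      have h2 := hφle _ hmem
      rw [hdec w (‖w‖ + 1), heq, mul_zero, add_zero] at h2
      rw [hdec w 0, heq, mul_zero, add_zero]
      exact h2
    have hψ0 : ∀ w : Fin n → ℝ, φ (w, 0) = 0 := by
      intro w
      refine le_antisymm (hψ w) ?_
      have hw := hψ (-w)
      have hneg : ((-w, (0:ℝ)) : (Fin n → ℝ) × ℝ) = -(w, 0) := by
        refine Prod.ext rfl ?_; simp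
      rw [hneg, map_neg] at hw
      linarith
    have hd0 : ((fun i => a i 0 : Fin n → ℝ), (0 : StrongDual ℝ Y) z - ε) ∈ D :=
      ⟨0, by simp, rfl⟩
    have h3 := hDu _ hd0
    have h4 : φ ((fun i => a i 0 : Fin n → ℝ), (0 : StrongDual ℝ Y) z - ε) = 0 := by
      rw [hdec, heq, mul_zero, add_zero]
      have : ∀ i : Fin n, (fun i => a i (0 : StrongDual ℝ Y)) i * φ (Pi.single i 1, 0) = 0 := by
        intro i; simp
      rw [Finset.sum_congr rfl fun i _ => this i, Finset.sum_const, smul_zero]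
    have h5 := hVu _ hv0
    rw [show φ ((0 : Fin n → ℝ), (1:ℝ)) = c1 from rfl, heq] at h5
    rw [h4] at h3
    linarith
  refine ⟨fun i => φ (Pi.single i 1, 0) / (-c1), ?_⟩
  have key : ∀ f : StrongDual ℝ Y, ‖f‖ ≤ 1 →
      f z ≤ (∑ i, (φ (Pi.single i 1, 0) / (-c1)) * a i f) + ε := by
    intro f hf
    have hd : u ≤ φ ((fun i => a i f : Fin n → ℝ), f z - ε) :=
      hDu _ ⟨f, mem_closedBall_zero_iff.2 hf, rfl⟩
    rw [hdec] at hd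
    have h2 : (f z - ε) * (-c1) ≤ ∑ i, a i f * φ (Pi.single i 1, 0) := by nlinarith
    have hc1' : 0 < -c1 := by linarith
    have h3 : f z - ε ≤ (∑ i, a i f * φ (Pi.single i 1, 0)) / (-c1) :=
      (le_div_iff₀ hc1').2 h2
    have h4 : (∑ i, a i f * φ (Pi.single i 1, 0)) / (-c1)
        = ∑ i, (φ (Pi.single i 1, 0) / (-c1)) * a i f := by
      rw [Finset.sum_div]
      exact Finset.sum_congr rfl fun i _ => by ring
    linarith [h3, h4.symm.le]
  intro f
  rcases eq_or_ne f 0 with rfl | hf0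
  · have : ∀ i, ((fun i => φ (Pi.single i 1, 0) / (-c1)) i) * a i (0 : StrongDual ℝ Y) = 0 := by
      intro i; simp
    simp only [ContinuousLinearMap.zero_apply, norm_zero, mul_zero]
    rw [Finset.sum_congr rfl fun i _ => this i, Finset.sum_const, smul_zero, add_zero]
  · have hfn : 0 < ‖f‖ := norm_pos_iff.2 hf0
    have h1 : ‖(‖f‖⁻¹ • f)‖ ≤ 1 := by
      rw [norm_smul, norm_inv, norm_norm, inv_mul_cancel₀ hfn.ne']
    have h2 := key (‖f‖⁻¹ • f) h1
    have h3 : (‖f‖⁻¹ • f) z = ‖f‖⁻¹ * f z := rfl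
    have h4 : ∀ i, a i (‖f‖⁻¹ • f) = ‖f‖⁻¹ * a i f := fun i => by
      rw [map_smul]; rfl
    rw [h3] at h2
    rw [Finset.sum_congr rfl fun i _ => by rw [h4 i]] at h2
    have h5 := mul_le_mul_of_nonneg_left h2 hfn.le
    rw [mul_add, ← mul_assoc, mul_inv_cancel₀ hfn.ne', one_mul, Finset.mul_sum] at h5
    calc f z ≤ ∑ i, ‖f‖ * ((φ (Pi.single i 1, 0) / (-c1)) * (‖f‖⁻¹ * a i f)) + ‖f‖ * ε := h5
      _ = (∑ i, (φ (Pi.single i 1, 0) / (-c1)) * a i f) + ε * ‖f‖ := by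
          rw [mul_comm ‖f‖ ε]
          congr 1
          refine Finset.sum_congr rfl fun i _ => ?_
          calc ‖f‖ * ((φ (Pi.single i 1, 0) / (-c1)) * (‖f‖⁻¹ * a i f))
              = (‖f‖ * ‖f‖⁻¹) * ((φ (Pi.single i 1, 0) / (-c1)) * a i f) := by ring
            _ = (φ (Pi.single i 1, 0) / (-c1)) * a i f := by
                rw [mul_inv_cancel₀ hfn.ne', one_mul]

end Aux

section StepB
variable {Y : Type*} [NormedAddCommGroup Y] [NormedSpace ℝ Y]

set_option maxHeartbeats 1000000 in
lemma stepB {n : ℕ} {κ : Type*} [Fintype κ] [DecidableEq κ]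
    (a : Fin n → StrongDual ℝ (StrongDual ℝ Y)) (z : κ → Y) (lam : κ → Fin n → ℝ)
    {ε δ : ℝ} (hε : 0 < ε) (hδ : 0 < δ)
    (h : ∀ k, ∀ f : StrongDual ℝ Y, f (z k) ≤ (∑ i, lam k i * a i f) + ε * ‖f‖) :
    ∃ y : Fin n → Y, ∀ k, ‖z k - ∑ i, lam k i • y i‖ < ε + δ := by
  classical
  by_contra hc
  push_neg at hc
  set S : (Fin n → Y) →ₗ[ℝ] (κ → Y) :=
    { toFun := fun y k => ∑ i, lam k i • y i
      map_add' := by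
        intro y1 y2; funext k
        simp [smul_add, Finset.sum_add_distrib]
      map_smul' := by
        intro c y; funext k
        simp only [RingHom.id_apply, Pi.smul_apply, Finset.smul_sum]
        exact Finset.sum_congr rfl fun i _ => (smul_comm c (lam k i) (y i)).symm } with hS
  set U : Set (κ → Y) := Set.range S + ball (0 : κ → Y) (ε + δ) with hU
  have hUopen : IsOpen U := IsOpen.add_left isOpen_ball
  have hUconv : Convex ℝ U := by
    refine Convex.add ?_ (convex_ball _ _)
    rw [← Set.image_univ]
    exact convex_univ.linear_image S
  have hzU : z ∉ U := by
    rintro ⟨v, ⟨y, rfl⟩, b, hb, hvb⟩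
    obtain ⟨k, hk⟩ := hc y
    have hb' : ‖b‖ < ε + δ := mem_ball_zero_iff.1 hb
    have hzk : z k - S y k = b k := by rw [← hvb]; simp
    have hSyk : S y k = ∑ i, lam k i • y i := rfl
    have hbk := norm_le_pi_norm b k
    rw [← hzk, hSyk] at hbk
    linarith
  obtain ⟨φ, hφ⟩ := geometric_hahn_banach_open_point hUconv hUopen hzU
  have hzero : (0 : κ → Y) ∈ U := by
    refine ⟨S 0, ⟨0, rfl⟩, 0, ?_, by simp⟩
    rw [mem_ball_zero_iff]
    simp only [norm_zero]
    linarith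
  have hφz : 0 < φ z := by
    have := hφ _ hzero
    simpa using this
  have hrange : ∀ y, φ (S y) = 0 := by
    intro y
    by_contra h0
    have hmem : ∀ t : ℝ, t • S y ∈ U := by
      intro t
      refine ⟨t • S y, ⟨t • y, map_smul S t y⟩, 0, ?_, by simp⟩
      rw [mem_ball_zero_iff]; simp only [norm_zero]; linarith
    have := hφ _ (hmem (φ z / φ (S y)))
    rw [map_smul, smul_eq_mul, div_mul_cancel₀ _ h0] at this
    exact lt_irrefl _ this
  have hball : ∀ w : κ → Y, ‖w‖ < ε + δ → φ w < φ z := by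
    intro w hw
    refine hφ _ ⟨S 0, ⟨0, rfl⟩, w, mem_ball_zero_iff.2 hw, ?_⟩
    rw [map_zero]
    exact zero_add w
  -- the component functionals
  set sing : κ → (Y →L[ℝ] (κ → Y)) := fun k =>
    LinearMap.mkContinuous (LinearMap.single ℝ (fun _ : κ => Y) k) 1 (fun y => by
      rw [one_mul]
      refine (pi_norm_le_iff_of_nonneg (norm_nonneg y)).2 fun j => ?_
      show ‖(Pi.single k y : κ → Y) j‖ ≤ ‖y‖
      rcases eq_or_ne j k with rfl | hjk
      · rw [Pi.single_eq_same]
      · rw [Pi.single_eq_of_ne hjk, norm_zero]; exact norm_nonneg y) with hsing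
  have hsing_apply : ∀ (k : κ) (y : Y), sing k y = Pi.single k y := fun _ _ => rfl
  set fk : κ → StrongDual ℝ Y := fun k => φ.comp (sing k) with hfk
  have hfk_apply : ∀ (k : κ) (y : Y), fk k y = φ (Pi.single k y) := fun _ _ => rfl
  have hφeval : ∀ w : κ → Y, φ w = ∑ k, fk k (w k) := by
    intro w
    conv_lhs => rw [← Finset.univ_sum_single w]
    rw [map_sum]
    exact Finset.sum_congr rfl fun k _ => (hfk_apply k (w k)).symm
  have hkey2 : ∀ i : Fin n, (∑ k, lam k i • fk k) = (0 : StrongDual ℝ Y) := by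
    intro i
    ext yv
    simp only [ContinuousLinearMap.sum_apply, ContinuousLinearMap.smul_apply, smul_eq_mul,
      ContinuousLinearMap.zero_apply]
    have h1 : S (Pi.single i yv) = fun k => lam k i • yv := by
      funext k
      show (∑ i', lam k i' • (Pi.single i yv : Fin n → Y) i') = lam k i • yv
      rw [Finset.sum_eq_single i]
      · rw [Pi.single_eq_same]
      · intro i' _ hne
        rw [Pi.single_eq_of_ne hne, smul_zero]
      · intro habs
        exact absurd (Finset.mem_univ i) habs
    have h2 := hrange (Pi.single i yv)
    rw [h1, hφeval] at h2
    rw [← h2]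
    refine Finset.sum_congr rfl fun k _ => ?_
    rw [hfk_apply, hfk_apply, Pi.single_smul, map_smul, smul_eq_mul]
  have hsum_norm : ∑ k, ‖fk k‖ ≤ ‖φ‖ := by
    refine le_of_forall_pos_le_add fun η hη => ?_
    set m : ℕ := Fintype.card κ with hm
    have hηm : 0 < η / (m + 1) := by positivity
    have hchoice : ∀ k, ∃ yv : Y, ‖yv‖ ≤ 1 ∧ ‖fk k‖ - η / (m + 1) ≤ fk k yv := by
      intro k
      rcases le_or_gt ‖fk k‖ (η / (m + 1)) with hle | hlt
      · exact ⟨0, by simp, by rw [map_zero]; linarith⟩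
      · obtain ⟨x, hx1, hx2⟩ := (fk k).exists_lt_apply_of_lt_opNorm
          (r := ‖fk k‖ - η / (m + 1)) (by linarith)
        rcases le_or_gt 0 (fk k x) with hs | hs
        · refine ⟨x, hx1.le, ?_⟩
          rw [Real.norm_eq_abs, abs_of_nonneg hs] at hx2
          linarith
        · refine ⟨-x, by rw [norm_neg]; exact hx1.le, ?_⟩
          rw [Real.norm_eq_abs, abs_of_neg hs] at hx2
          rw [map_neg]
          linarith
    choose yv hy1 hy2 using hchoice
    have hwnorm : ‖(fun k => yv k : κ → Y)‖ ≤ 1 :=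
      (pi_norm_le_iff_of_nonneg zero_le_one).2 hy1
    have hsum1 : ∑ k, (‖fk k‖ - η / (m + 1)) ≤ φ (fun k => yv k) := by
      rw [hφeval]
      exact Finset.sum_le_sum fun k _ => hy2 k
    have hφw : φ (fun k => yv k) ≤ ‖φ‖ := by
      calc φ (fun k => yv k) ≤ |φ (fun k => yv k)| := le_abs_self _
        _ = ‖φ (fun k => yv k)‖ := (Real.norm_eq_abs _).symm
        _ ≤ ‖φ‖ * ‖(fun k => yv k : κ → Y)‖ := φ.le_opNorm _
        _ ≤ ‖φ‖ * 1 := by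
            exact mul_le_mul_of_nonneg_left hwnorm (norm_nonneg φ)
        _ = ‖φ‖ := mul_one _
    have hcard : ∑ k : κ, (‖fk k‖ - η / (m + 1)) = (∑ k, ‖fk k‖) - m * (η / (m + 1)) := by
      rw [Finset.sum_sub_distrib, Finset.sum_const, Finset.card_univ, nsmul_eq_mul, hm]
    have hmη : (m : ℝ) * (η / (m + 1)) ≤ η := by
      rw [mul_div_assoc']
      rw [div_le_iff₀ (by positivity)]
      nlinarith [Nat.cast_nonneg (α := ℝ) m]
    linarith
  have hfinal : φ z ≤ ε * ‖φ‖ := by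
    rw [hφeval]
    calc ∑ k, fk k (z k) ≤ ∑ k, ((∑ i, lam k i * a i (fk k)) + ε * ‖fk k‖) :=
          Finset.sum_le_sum fun k _ => h k (fk k)
      _ = (∑ i, a i (∑ k, lam k i • fk k)) + ε * ∑ k, ‖fk k‖ := by
          rw [Finset.sum_add_distrib, Finset.mul_sum]
          congr 1
          rw [Finset.sum_comm]
          refine Finset.sum_congr rfl fun i _ => ?_
          rw [map_sum]
          refine Finset.sum_congr rfl fun k _ => ?_
          rw [map_smul, smul_eq_mul]
      _ = 0 + ε * ∑ k, ‖fk k‖ := by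
          congr 1
          rw [Finset.sum_congr rfl fun i _ => by rw [hkey2 i, map_zero], Finset.sum_const,
            smul_zero]
      _ ≤ ε * ‖φ‖ := by
          rw [zero_add]
          exact mul_le_mul_of_nonneg_left hsum_norm hε.le
  have hφnorm_pos : 0 < ‖φ‖ := by
    by_contra hcon
    push_neg at hcon
    have : ‖φ‖ = 0 := le_antisymm hcon (norm_nonneg φ)
    have h1 : φ z ≤ 0 := by
      calc φ z ≤ |φ z| := le_abs_self _
        _ = ‖φ z‖ := (Real.norm_eq_abs _).symm
        _ ≤ ‖φ‖ * ‖z‖ := φ.le_opNorm z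
        _ = 0 := by rw [this, zero_mul]
    linarith
  have hεφ : (ε + δ) * ‖φ‖ ≤ φ z := by
    by_contra hcon
    push_neg at hcon
    have hr : φ z / (ε + δ) < ‖φ‖ := by
      rw [div_lt_iff₀ (by positivity)]
      linarith [mul_comm ‖φ‖ (ε + δ)]
    obtain ⟨x, hx1, hx2⟩ := φ.exists_lt_apply_of_lt_opNorm hr
    set x' : κ → Y := if 0 ≤ φ x then x else -x with hx'
    have hφx' : φ z / (ε + δ) < φ x' := by
      rw [Real.norm_eq_abs] at hx2
      rcases le_or_gt 0 (φ x) with hs | hs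
      · rw [hx', if_pos hs]; rwa [abs_of_nonneg hs] at hx2
      · rw [hx', if_neg (not_le.2 hs), map_neg]; rwa [abs_of_neg hs] at hx2
    have hx'n : ‖x'‖ < 1 := by
      rcases le_or_gt 0 (φ x) with hs | hs
      · rw [hx', if_pos hs]; exact hx1
      · rw [hx', if_neg (not_le.2 hs), norm_neg]; exact hx1
    have hw : ‖(ε + δ) • x'‖ < ε + δ := by
      rw [norm_smul, Real.norm_eq_abs, abs_of_pos (by linarith)]
      calc (ε + δ) * ‖x'‖ < (ε + δ) * 1 := by
            exact mul_lt_mul_of_pos_left hx'n (by linarith)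
        _ = ε + δ := mul_one _
    have hb := hball _ hw
    rw [map_smul, smul_eq_mul] at hb
    have : φ z < (ε + δ) * φ x' := by
      rw [← div_lt_iff₀' (by positivity : (0:ℝ) < ε + δ)]
      exact hφx'
    linarith
  nlinarith
end StepB

set_option maxHeartbeats 1000000 in
set_option synthInstance.maxHeartbeats 400000 in
/-- For compact `T` between Banach spaces, the Gelfand numbers of the adjoint equal the
Kolmogorov numbers of the operator: `cₙ(T*) = δₙ(T)`. -/
theorem gelfandNumber_adjoint_eq_kolmogorovNumber (T : X →L[ℝ] Y)
    (hT : IsCompact (closure (T '' closedBall 0 1))) (n : ℕ) :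
    gelfandNumber n (adjointCLM T) = kolmogorovNumber n T := by
  classical
  have hadj : ∀ (f : StrongDual ℝ Y) (x : X), adjointCLM T f x = f (T x) := fun f x => rfl
  set Sk : Set ℝ := {c : ℝ | ∃ G : Submodule ℝ Y, FiniteDimensional ℝ G ∧
    Module.finrank ℝ G ≤ n ∧ c = ‖(quotCLM G).comp T‖} with hSkdef
  set Sg : Set ℝ := {ε : ℝ | 0 < ε ∧ ∃ a : Fin n → StrongDual ℝ (StrongDual ℝ Y),
    ∀ f : StrongDual ℝ Y, ‖adjointCLM T f‖ ≤ (⨆ i, |a i f|) + ε * ‖f‖} with hSgdef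
  have hk : kolmogorovNumber n T = sInf Sk := rfl
  have hg : gelfandNumber n (adjointCLM T) = sInf Sg := rfl
  have hSk_ne : Sk.Nonempty := ⟨‖(quotCLM (⊥ : Submodule ℝ Y)).comp T‖, ⊥, inferInstance,
    by rw [finrank_bot]; exact Nat.zero_le n, rfl⟩
  have hSk_bdd : BddBelow Sk := ⟨0, by rintro c ⟨G, _, _, rfl⟩; exact norm_nonneg ((quotCLM G).comp T)⟩
  have hSg_bdd : BddBelow Sg := ⟨0, fun ε hε => hε.1.le⟩
  have hSg_ne : Sg.Nonempty := by
    refine ⟨‖adjointCLM T‖ + 1, by positivity, fun _ => 0, fun f => ?_⟩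
    have h1 : ‖adjointCLM T f‖ ≤ (‖adjointCLM T‖ + 1) * ‖f‖ := by
      calc ‖adjointCLM T f‖ ≤ ‖adjointCLM T‖ * ‖f‖ := (adjointCLM T).le_opNorm f
        _ ≤ (‖adjointCLM T‖ + 1) * ‖f‖ := by nlinarith [norm_nonneg f]
    have h2 : (0:ℝ) ≤ ⨆ i : Fin n, |(0 : StrongDual ℝ (StrongDual ℝ Y)) f| :=
      Real.iSup_nonneg fun i => abs_nonneg _
    linarith
  have part1 : sInf Sk ≤ sInf Sg := by
    refine le_csInf hSg_ne ?_
    rintro ε ⟨hεpos, a, ha⟩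
    refine le_of_forall_pos_le_add fun δ hδ => ?_
    have htb : TotallyBounded (T '' closedBall 0 1) :=
      hT.totallyBounded.subset subset_closure
    obtain ⟨t, hts, htfin, htcover⟩ := totallyBounded_iff_subset.1 htb
      {p : Y × Y | dist p.1 p.2 < δ/3} (dist_mem_uniformity (by positivity))
    haveI : Fintype t := htfin.fintype
    set z : t → Y := fun k => (k : Y) with hz
    have hzx : ∀ k : t, ∃ x : X, ‖x‖ ≤ 1 ∧ T x = z k := by
      intro k
      obtain ⟨x, hx, hTx⟩ := hts k.2
      exact ⟨x, by rwa [mem_closedBall_zero_iff] at hx, hTx⟩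
    have hstepA : ∀ k : t, ∃ lam : Fin n → ℝ,
        ∀ f : StrongDual ℝ Y, f (z k) ≤ (∑ i, lam i * a i f) + ε * ‖f‖ := by
      intro k
      refine stepA a (z k) hεpos fun f hf => ?_
      obtain ⟨x, hx, hTx⟩ := hzx k
      rw [← hTx]
      calc f (T x) ≤ |f (T x)| := le_abs_self _
        _ = ‖adjointCLM T f x‖ := by rw [hadj]; exact (Real.norm_eq_abs _).symm
        _ ≤ ‖adjointCLM T f‖ * ‖x‖ := (adjointCLM T f).le_opNorm x
        _ ≤ ‖adjointCLM T f‖ := by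
            nlinarith [norm_nonneg (adjointCLM T f)]
        _ ≤ (⨆ i, |a i f|) + ε * ‖f‖ := ha f
        _ ≤ (⨆ i, |a i f|) + ε := by nlinarith
    choose lam hlam using hstepA
    obtain ⟨y, hy⟩ := stepB a z lam hεpos (by positivity : (0:ℝ) < δ/3) hlam
    set G : Submodule ℝ Y := Submodule.span ℝ (Set.range y) with hG
    haveI hGfin : FiniteDimensional ℝ G :=
      FiniteDimensional.span_of_finite ℝ (Set.finite_range y)
    have hGrank : Module.finrank ℝ G ≤ n := by
      have h1 : (Set.range y).finrank ℝ ≤ Fintype.card (Fin n) :=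
        finrank_range_le_card (R := ℝ) y
      simpa [Set.finrank, hG] using h1
    have hQnorm : ‖(quotCLM G).comp T‖ ≤ ε + δ := by
      refine unit_opNorm_le _ (by positivity) fun x hx => ?_
      have hmem : T x ∈ T '' closedBall 0 1 := ⟨x, mem_closedBall_zero_iff.2 hx, rfl⟩
      have hcov := htcover hmem
      rw [Set.mem_iUnion₂] at hcov
      obtain ⟨w, hw, hdist⟩ := hcov
      have h1 : ‖T x - z ⟨w, hw⟩‖ < δ/3 := by
        have h1' : dist (T x) w < δ/3 := hdist
        rwa [dist_eq_norm] at h1'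
      have h2 : ‖z ⟨w, hw⟩ - ∑ i, lam ⟨w, hw⟩ i • y i‖ < ε + δ/3 := hy ⟨w, hw⟩
      have hgG : (∑ i, lam ⟨w, hw⟩ i • y i) ∈ G :=
        Submodule.sum_mem _ fun i _ => Submodule.smul_mem _ _ (Submodule.subset_span ⟨i, rfl⟩)
      have h3 : ((quotCLM G).comp T) x = Submodule.Quotient.mk (T x) := rfl
      have h4 : (Submodule.Quotient.mk (T x) : Y ⧸ G)
          = Submodule.Quotient.mk (T x - ∑ i, lam ⟨w, hw⟩ i • y i) := by
        rw [Submodule.Quotient.eq]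
        simpa using hgG
      rw [h3, h4]
      have h5 : T x - ∑ i, lam ⟨w, hw⟩ i • y i
          = (T x - z ⟨w, hw⟩) + (z ⟨w, hw⟩ - ∑ i, lam ⟨w, hw⟩ i • y i) := by abel
      calc ‖(Submodule.Quotient.mk (T x - ∑ i, lam ⟨w, hw⟩ i • y i) : Y ⧸ G)‖
          ≤ ‖T x - ∑ i, lam ⟨w, hw⟩ i • y i‖ := Submodule.Quotient.norm_mk_le _ _
        _ ≤ ‖T x - z ⟨w, hw⟩‖ + ‖z ⟨w, hw⟩ - ∑ i, lam ⟨w, hw⟩ i • y i‖ := by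
            rw [h5]; exact norm_add_le _ _
        _ ≤ ε + δ := by linarith
    calc sInf Sk ≤ ‖(quotCLM G).comp T‖ := csInf_le hSk_bdd ⟨G, hGfin, hGrank, rfl⟩
      _ ≤ ε + δ := hQnorm
  have part2 : sInf Sg ≤ sInf Sk := by
    refine le_csInf hSk_ne ?_
    rintro c ⟨G, hGfin, hGrank, rfl⟩
    refine le_of_forall_pos_le_add fun δ hδ => ?_
    refine csInf_le hSg_bdd ?_
    refine ⟨by positivity, ?_⟩
    set m := Module.finrank ℝ G with hm
    set b := Module.finBasis ℝ G with hb
    set L := LinearMap.toContinuousLinearMap (b.equivFun : G →ₗ[ℝ] (Fin m → ℝ)) with hL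
    set C := ‖L‖ with hCdef
    set R := ‖T‖ + ‖(quotCLM G).comp T‖ + δ with hR
    have hC0 : (0:ℝ) ≤ C := by rw [hCdef]; exact norm_nonneg L
    have hR0 : (0:ℝ) ≤ R := by positivity
    set aa : Fin n → StrongDual ℝ (StrongDual ℝ Y) := fun i =>
      if h : (i : ℕ) < m then ((m : ℝ) * (C * R)) • inclusionInDoubleDual ℝ Y ((b ⟨i, h⟩ : G) : Y)
      else 0 with haa
    refine ⟨aa, ?_⟩
    intro f
    have hbdd : BddAbove (Set.range fun i => |aa i f|) := (Set.finite_range _).bddAbove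
    have hsup0 : (0:ℝ) ≤ ⨆ i, |aa i f| := Real.iSup_nonneg fun i => abs_nonneg _
    have hclaim : ∀ g : G, ‖(g:Y)‖ ≤ R → |f (g:Y)| ≤ ⨆ i, |aa i f| := by
      intro g hg
      have hrepr : (g : Y) = ∑ j, b.equivFun g j • ((b j : G) : Y) := by
        have h0 := congrArg G.subtype (Module.Basis.sum_equivFun b g)
        rw [map_sum] at h0
        simp only [map_smul, Submodule.subtype_apply] at h0
        exact h0.symm
      have hcoef : ∀ j, |b.equivFun g j| ≤ C * R := by
        intro j
        have hLg : L g = b.equivFun g := by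
          rw [hL, LinearMap.coe_toContinuousLinearMap']; rfl
        calc |b.equivFun g j| = ‖(b.equivFun g : Fin m → ℝ) j‖ := (Real.norm_eq_abs _).symm
          _ ≤ ‖(b.equivFun g : Fin m → ℝ)‖ := norm_le_pi_norm _ j
          _ = ‖L g‖ := by rw [hLg]
          _ ≤ C * ‖g‖ := L.le_opNorm g
          _ ≤ C * R := by
              have hgn : ‖g‖ = ‖(g:Y)‖ := rfl
              nlinarith [hg, hC0]
      have hterm : ∀ j : Fin m, |f ((b j : G) : Y)| * ((m:ℝ) * (C * R)) ≤ ⨆ i, |aa i f| := by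
        intro j
        have hjn : ((j : ℕ)) < n := lt_of_lt_of_le j.2 hGrank
        have hval : |aa ⟨(j : ℕ), hjn⟩ f| = (m:ℝ) * (C * R) * |f ((b j : G) : Y)| := by
          rw [haa]
          simp only []
          rw [dif_pos (show ((⟨(j : ℕ), hjn⟩ : Fin n) : ℕ) < m from j.2)]
          rw [ContinuousLinearMap.smul_apply, smul_eq_mul, abs_mul]
          have hj' : (⟨((⟨(j : ℕ), hjn⟩ : Fin n) : ℕ), j.2⟩ : Fin m) = j := rfl
          rw [hj']
          rw [abs_of_nonneg (by positivity)]
          rfl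
        calc |f ((b j : G) : Y)| * ((m:ℝ) * (C * R))
            = |aa ⟨(j : ℕ), hjn⟩ f| := by rw [hval]; try ring
          _ ≤ ⨆ i, |aa i f| := le_ciSup hbdd _
      calc |f (g:Y)| = |∑ j, b.equivFun g j * f ((b j : G) : Y)| := by
            rw [hrepr, map_sum]
            congr 1
            refine Finset.sum_congr rfl fun j _ => ?_
            rw [map_smul, smul_eq_mul]
        _ ≤ ∑ j, |b.equivFun g j * f ((b j : G) : Y)| := Finset.abs_sum_le_sum_abs _ _
        _ ≤ ∑ j, (C * R) * |f ((b j : G) : Y)| := by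
            refine Finset.sum_le_sum fun j _ => ?_
            rw [abs_mul]
            exact mul_le_mul_of_nonneg_right (hcoef j) (abs_nonneg _)
        _ ≤ ⨆ i, |aa i f| := by
            rcases Nat.eq_zero_or_pos m with hm0 | hmpos
            · haveI : IsEmpty (Fin m) := ⟨fun j => absurd j.2 (by omega)⟩
              rw [Finset.univ_eq_empty, Finset.sum_empty]
              exact hsup0
            · have hmR : (0:ℝ) < (m:ℝ) := by exact_mod_cast hmpos
              have hterm' : ∀ j : Fin m, (C * R) * |f ((b j : G) : Y)|
                  ≤ (⨆ i, |aa i f|) / m := by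
                intro j
                rw [le_div_iff₀ hmR]
                calc (C * R) * |f ((b j : G) : Y)| * m
                    = |f ((b j : G) : Y)| * ((m:ℝ) * (C * R)) := by ring
                  _ ≤ ⨆ i, |aa i f| := hterm j
              calc ∑ j, (C * R) * |f ((b j : G) : Y)|
                  ≤ ∑ _j : Fin m, (⨆ i, |aa i f|) / m :=
                    Finset.sum_le_sum fun j _ => hterm' j
                _ = (m:ℝ) * ((⨆ i, |aa i f|) / m) := by
                    rw [Finset.sum_const, Finset.card_univ, Fintype.card_fin, nsmul_eq_mul]
                _ = ⨆ i, |aa i f| := by field_simp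
    refine unit_opNorm_le _ (by positivity) fun x hx => ?_
    obtain ⟨w, hw_mk, hw_norm⟩ :=
      Submodule.Quotient.norm_mk_lt (Submodule.Quotient.mk (T x) : Y ⧸ G) hδ
    have hgmem : T x - w ∈ G := by
      rw [← Submodule.Quotient.eq]
      exact hw_mk.symm
    have hmkTx : ‖(Submodule.Quotient.mk (T x) : Y ⧸ G)‖ ≤ ‖(quotCLM G).comp T‖ := by
      have h5 : ((quotCLM G).comp T) x = Submodule.Quotient.mk (T x) := rfl
      rw [← h5]
      calc ‖((quotCLM G).comp T) x‖ ≤ ‖(quotCLM G).comp T‖ * ‖x‖ :=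
            ((quotCLM G).comp T).le_opNorm x
        _ ≤ ‖(quotCLM G).comp T‖ := by nlinarith [norm_nonneg ((quotCLM G).comp T)]
    have hgnorm : ‖((⟨T x - w, hgmem⟩ : G) : Y)‖ ≤ R := by
      show ‖T x - w‖ ≤ R
      have h6 : ‖T x‖ ≤ ‖T‖ := by
        calc ‖T x‖ ≤ ‖T‖ * ‖x‖ := T.le_opNorm x
          _ ≤ ‖T‖ := by nlinarith [norm_nonneg T]
      calc ‖T x - w‖ ≤ ‖T x‖ + ‖w‖ := norm_sub_le _ _
        _ ≤ ‖T‖ + (‖(quotCLM G).comp T‖ + δ) := by linarith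
        _ = R := by rw [hR]; ring
    have h8 : f (T x) = f (T x - w) + f w := by
      rw [← map_add]
      congr 1
      abel
    calc ‖(adjointCLM T f) x‖ = |f (T x)| := by rw [hadj, Real.norm_eq_abs]
      _ ≤ |f (T x - w)| + |f w| := by rw [h8]; exact abs_add_le _ _
      _ ≤ (⨆ i, |aa i f|) + ‖f‖ * ‖w‖ := by
          refine add_le_add (hclaim ⟨T x - w, hgmem⟩ hgnorm) ?_
          calc |f w| = ‖f w‖ := (Real.norm_eq_abs _).symm
            _ ≤ ‖f‖ * ‖w‖ := f.le_opNorm w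
      _ ≤ (⨆ i, |aa i f|) + (‖(quotCLM G).comp T‖ + δ) * ‖f‖ := by
          have h9 : ‖f‖ * ‖w‖ ≤ ‖f‖ * (‖(quotCLM G).comp T‖ + δ) :=
            mul_le_mul_of_nonneg_left (by linarith) (norm_nonneg f)
          nlinarith [h9, mul_comm ‖f‖ (‖(quotCLM G).comp T‖ + δ)]
  rw [hg, hk]
  exact le_antisymm part2 part1
end
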